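/- arXiv:2605.16601 — 7 statements merged into one kernel-verified Lean document; each statement's English description precedes it below -/
import Mathlib

section
/- Fix an integer n ≥ 2. Suppose d̂_1,…,d̂_n ≥ 0 and h:[0,1]→[0,∞) is nondecreasing and integrable, satisfying: d̂_1 ≤ ∫_0^1 h(u) du; d̂_i ≤ ∫_0^q h(u) du + (1−q)·d̂_{i−1} for every i = 2,…,n and every q ∈ [0,1]; and ∫_0^1 h(u)·P_n'(1−u) du = 1. Suppose also α_1 ≥ 0, α_i:[0,1]→[0,∞) integrable for i = 2,…,n, η:[0,1]→[0,∞) continuously differentiable with η(1) = 0, and ζ ∈ ℝ, satisfying: α_1 ≥ ∫_0^1 (1−q)·α_2(q) dq + 1; ∫_0^1 α_i(q) dq ≥ ∫_0^1 (1−q)·α_{i+1}(q) dq + 1 for i = 2,…,n−1; ∫_0^1 α_n(q) dq ≥ 1; and ζ·P_n'(1−u) + η'(u) ≥ α_1 + Σ_{i=2}^n ∫_u^1 α_i(q) dq for all u ∈ [0,1]. Then ζ ≥ Σ_{i=1}^n d̂_i (weak duality between the primal linear program (LP)_DC and its dual (DLP)_DC). -/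
open MeasureTheory Finset

/-- `P_n(t) = ∑_{i=1}^n t^i`. -/
noncomputable def Pn (n : ℕ) (t : ℝ) : ℝ := ∑ i ∈ Finset.Icc 1 n, t ^ i

/-- `P_n'(t) = ∑_{i=1}^n i t^{i-1}`. -/
noncomputable def Pn' (n : ℕ) (t : ℝ) : ℝ := ∑ i ∈ Finset.Icc 1 n, (i : ℝ) * t ^ (i - 1)

lemma fubini_tri (f g : ℝ → ℝ) (hf : IntegrableOn f (Set.Icc 0 1))
    (hg : IntegrableOn g (Set.Icc 0 1)) :
    (∫ u in (0:ℝ)..1, f u * ∫ q in u..(1:ℝ), g q)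
      = ∫ q in (0:ℝ)..1, g q * ∫ u in (0:ℝ)..q, f u := by
  set μ := volume.restrict (Set.Ioc (0:ℝ) 1) with hμ
  have hf' : Integrable f μ := hf.mono_set Set.Ioc_subset_Icc_self
  have hg' : Integrable g μ := hg.mono_set Set.Ioc_subset_Icc_self
  set S : Set (ℝ × ℝ) := {p : ℝ × ℝ | p.1 < p.2} with hS
  have hSmeas : MeasurableSet S := (isOpen_lt continuous_fst continuous_snd).measurableSet
  set F : ℝ × ℝ → ℝ := S.indicator (fun p => f p.1 * g p.2) with hF
  have hFint : Integrable F (μ.prod μ) := (hf'.mul_prod hg').indicator hSmeas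
  have swap : ∫ u, (∫ q, F (u, q) ∂μ) ∂μ = ∫ q, (∫ u, F (u, q) ∂μ) ∂μ :=
    integral_integral_swap hFint
  have h1 : ∀ u ∈ Set.Ioc (0:ℝ) 1, (∫ q, F (u, q) ∂μ) = f u * ∫ q in u..(1:ℝ), g q := by
    intro u hu
    have : (fun q => F (u, q)) = (Set.Ioi u).indicator (fun q => f u * g q) := by
      funext q
      by_cases h : u < q <;> simp [hF, Set.indicator, hS, h]
    rw [this, integral_indicator measurableSet_Ioi, Measure.restrict_restrict measurableSet_Ioi]
    have : Set.Ioi u ∩ Set.Ioc 0 1 = Set.Ioc u 1 := by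
      ext x; simp only [Set.mem_inter_iff, Set.mem_Ioi, Set.mem_Ioc]
      constructor
      · rintro ⟨h1, h2, h3⟩; exact ⟨h1, h3⟩
      · rintro ⟨h1, h2⟩; exact ⟨h1, lt_trans hu.1 h1, h2⟩
    rw [this, ← intervalIntegral.integral_of_le hu.2, intervalIntegral.integral_const_mul]
  have h2 : ∀ q ∈ Set.Ioc (0:ℝ) 1, (∫ u, F (u, q) ∂μ) = g q * ∫ u in (0:ℝ)..q, f u := by
    intro q hq
    have : (fun u => F (u, q)) = (Set.Iio q).indicator (fun u => f u * g q) := by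
      funext u
      by_cases h : u < q <;> simp [hF, Set.indicator, hS, h]
    rw [this, integral_indicator measurableSet_Iio, Measure.restrict_restrict measurableSet_Iio]
    have : Set.Iio q ∩ Set.Ioc 0 1 = Set.Ioo 0 q := by
      ext x; simp only [Set.mem_inter_iff, Set.mem_Iio, Set.mem_Ioc, Set.mem_Ioo]
      constructor
      · rintro ⟨h1, h2, h3⟩; exact ⟨h2, h1⟩
      · rintro ⟨h1, h2⟩; exact ⟨h2, h1, le_trans (le_of_lt h2) hq.2⟩
    rw [this, ← integral_Ioc_eq_integral_Ioo, ← intervalIntegral.integral_of_le hq.1.le,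
      intervalIntegral.integral_mul_const, mul_comm]
  rw [intervalIntegral.integral_of_le (by norm_num : (0:ℝ) ≤ 1),
      intervalIntegral.integral_of_le (by norm_num : (0:ℝ) ≤ 1)]
  calc ∫ u in Set.Ioc (0:ℝ) 1, f u * ∫ q in u..(1:ℝ), g q
      = ∫ u, (∫ q, F (u, q) ∂μ) ∂μ := by
        refine setIntegral_congr_ae measurableSet_Ioc ?_ |>.symm
        filter_upwards with u hu using h1 u hu
    _ = ∫ q, (∫ u, F (u, q) ∂μ) ∂μ := swap
    _ = ∫ q in Set.Ioc (0:ℝ) 1, g q * ∫ u in (0:ℝ)..q, f u := by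
        refine setIntegral_congr_ae measurableSet_Ioc ?_
        filter_upwards with q hq using h2 q hq

lemma key_eta (h : ℝ → ℝ) (hh0 : ∀ u ∈ Set.Icc (0:ℝ) 1, 0 ≤ h u)
    (hhmono : MonotoneOn h (Set.Icc 0 1))
    (hhint : IntegrableOn h (Set.Icc 0 1))
    (η η' : ℝ → ℝ)
    (hη0 : ∀ u ∈ Set.Icc (0:ℝ) 1, 0 ≤ η u)
    (hηderiv : ∀ u ∈ Set.Icc (0:ℝ) 1, HasDerivAt η (η' u) u)
    (hη'cont : ContinuousOn η' (Set.Icc 0 1))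
    (hη1 : η 1 = 0) :
    (∫ u in (0:ℝ)..1, h u * η' u) ≤ 0 := by
  obtain ⟨C, hC⟩ := (isCompact_Icc).exists_bound_of_continuousOn hη'cont
  set M : ℝ := max C 0 with hM
  have hM0 : 0 ≤ M := le_max_right _ _
  have hMb : ∀ u ∈ Set.Icc (0:ℝ) 1, |η' u| ≤ M := fun u hu =>
    le_trans (hC u hu) (le_max_left _ _)
  -- integrability of products
  have hint : IntegrableOn (fun u => h u * η' u) (Set.Icc 0 1) :=
    hhint.mul_continuousOn hη'cont isCompact_Icc
  have key : ∀ N : ℕ, 0 < N →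
      (∫ u in (0:ℝ)..1, h u * η' u) ≤ (h 1 - h 0) * M / N := by
    intro N hN
    set x : ℕ → ℝ := fun k => (k : ℝ) / N with hx
    have hNR : (0:ℝ) < N := Nat.cast_pos.mpr hN
    have hx0 : x 0 = 0 := by simp [hx]
    have hxN : x N = 1 := by show (N:ℝ) / N = 1; exact div_self hNR.ne'
    have hxmem : ∀ k, k ≤ N → x k ∈ Set.Icc (0:ℝ) 1 := by
      intro k hk
      constructor
      · positivity
      · rw [div_le_one hNR]; exact_mod_cast hk
    have hxle : ∀ k, x k ≤ x (k+1) := by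
      intro k
      exact (div_le_div_iff_of_pos_right hNR).mpr (by exact_mod_cast Nat.le_succ k)
    have hsub : ∀ k, k < N → Set.Icc (x k) (x (k+1)) ⊆ Set.Icc 0 1 := by
      intro k hk
      exact Set.Icc_subset_Icc (hxmem k hk.le).1 (hxmem (k+1) hk).2
    have hii : ∀ k < N, IntervalIntegrable (fun u => h u * η' u) volume (x k) (x (k+1)) := by
      intro k hk
      rw [intervalIntegrable_iff_integrableOn_Icc_of_le (hxle k)]
      exact hint.mono_set (hsub k hk)
    have hsplit : ∑ k ∈ range N, (∫ u in (x k)..(x (k+1)), h u * η' u)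
        = ∫ u in (0:ℝ)..1, h u * η' u := by
      rw [intervalIntegral.sum_integral_adjacent_intervals hii, hx0, hxN]
    -- per-interval bound
    have hstep : ∀ k, k < N →
        (∫ u in (x k)..(x (k+1)), h u * η' u)
          ≤ h (x (k+1)) * (η (x (k+1)) - η (x k)) + (h (x (k+1)) - h (x k)) * (M / N) := by
      intro k hk
      have hmemk := hxmem k hk.le
      have hmemk1 := hxmem (k+1) hk
      have hptwise : ∀ u ∈ Set.Icc (x k) (x (k+1)),
          h u * η' u ≤ h (x (k+1)) * η' u + (h (x (k+1)) - h (x k)) * M := by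
        intro u hu
        have hu01 : u ∈ Set.Icc (0:ℝ) 1 := hsub k hk hu
        have h1 : h u ≤ h (x (k+1)) := hhmono hu01 hmemk1 hu.2
        have h2 : h (x k) ≤ h u := hhmono hmemk hu01 hu.1
        have : h u * η' u - h (x (k+1)) * η' u = -((h (x (k+1)) - h u) * η' u) := by ring
        nlinarith [hMb u hu01, abs_le.mp (hMb u hu01), neg_abs_le (η' u), le_abs_self (η' u)]
      have hcont' : ContinuousOn (fun u => h (x (k+1)) * η' u) (Set.uIcc (x k) (x (k+1))) := by
        rw [Set.uIcc_of_le (hxle k)]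
        exact continuousOn_const.mul (hη'cont.mono (hsub k hk))
      have hiiη' : IntervalIntegrable (fun u => h (x (k+1)) * η' u) volume (x k) (x (k+1)) :=
        hcont'.intervalIntegrable
      have hiiR : IntervalIntegrable
          (fun u => h (x (k+1)) * η' u + (h (x (k+1)) - h (x k)) * M) volume (x k) (x (k+1)) :=
        hiiη'.add intervalIntegrable_const
      have hmono := intervalIntegral.integral_mono_on (hxle k) (hii k hk) hiiR
        (fun u hu => hptwise u hu)
      have hftc : (∫ u in (x k)..(x (k+1)), η' u) = η (x (k+1)) - η (x k) := by
        apply intervalIntegral.integral_eq_sub_of_hasDerivAt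
        · intro u hu
          rw [Set.uIcc_of_le (hxle k)] at hu
          exact hηderiv u (hsub k hk hu)
        · apply ContinuousOn.intervalIntegrable
          apply hη'cont.mono
          rw [Set.uIcc_of_le (hxle k)]
          exact hsub k hk
      have hxdiff : x (k+1) - x k = 1 / N := by
        rw [hx]; push_cast; field_simp; ring
      calc (∫ u in (x k)..(x (k+1)), h u * η' u)
          ≤ ∫ u in (x k)..(x (k+1)), (h (x (k+1)) * η' u + (h (x (k+1)) - h (x k)) * M) := hmono
        _ = h (x (k+1)) * (η (x (k+1)) - η (x k)) + (h (x (k+1)) - h (x k)) * (M / N) := by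
            rw [intervalIntegral.integral_add, intervalIntegral.integral_const_mul, hftc,
              intervalIntegral.integral_const, smul_eq_mul, hxdiff]
            · ring
            · exact hiiη'
            · exact intervalIntegrable_const
    -- abel bound
    have habel : ∀ m, m ≤ N →
        ∑ k ∈ range m, h (x (k+1)) * (η (x (k+1)) - η (x k))
          ≤ h (x m) * η (x m) - h 0 * η 0 := by
      intro m
      induction m with
      | zero => intro _; simp [hx0]
      | succ m ih =>
        intro hm
        rw [Finset.sum_range_succ]
        have ihm := ih (le_trans (Nat.le_succ m) hm)
        have hmono2 : h (x m) ≤ h (x (m+1)) :=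
          hhmono (hxmem m (le_trans (Nat.le_succ m) hm)) (hxmem (m+1) hm) (hxle m)
        have hη0m : 0 ≤ η (x m) := hη0 _ (hxmem m (le_trans (Nat.le_succ m) hm))
        nlinarith
    have habelN := habel N le_rfl
    rw [hxN, hη1] at habelN
    have hh00 : 0 ≤ h 0 * η 0 :=
      mul_nonneg (hh0 0 (by norm_num)) (hη0 0 (by norm_num))
    -- telescoping of second term
    have htel : ∑ k ∈ range N, (h (x (k+1)) - h (x k)) * (M / N)
        = (h 1 - h 0) * (M / N) := by
      rw [← Finset.sum_mul, Finset.sum_range_sub (fun k => h (x k)), hx0, hxN]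
    calc (∫ u in (0:ℝ)..1, h u * η' u)
        = ∑ k ∈ range N, (∫ u in (x k)..(x (k+1)), h u * η' u) := hsplit.symm
      _ ≤ ∑ k ∈ range N, (h (x (k+1)) * (η (x (k+1)) - η (x k)) + (h (x (k+1)) - h (x k)) * (M / N)) :=
          Finset.sum_le_sum (fun k hk => hstep k (Finset.mem_range.mp hk))
      _ = (∑ k ∈ range N, h (x (k+1)) * (η (x (k+1)) - η (x k)))
            + ∑ k ∈ range N, (h (x (k+1)) - h (x k)) * (M / N) := Finset.sum_add_distrib
      _ ≤ (h 1 * 0 - h 0 * η 0) + (h 1 - h 0) * (M / N) := by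
          rw [htel]; exact add_le_add_left habelN _
      _ ≤ (h 1 - h 0) * M / N := by
          rw [mul_zero, zero_sub]
          have : (h 1 - h 0) * (M / N) = (h 1 - h 0) * M / N := by ring
          linarith
  -- take N → ∞
  have htend : Filter.Tendsto (fun N : ℕ => (h 1 - h 0) * M / N) Filter.atTop (nhds 0) :=
    tendsto_const_div_atTop_nhds_zero_nat _
  exact ge_of_tendsto htend (Filter.eventually_atTop.mpr ⟨1, fun N hN => key N hN⟩)

/-- Weak duality between the primal linear program `(LP)_DC` and
its dual `(DLP)_DC`: any feasible dual value `ζ` dominates any feasible primal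
value `∑_{i=1}^n d̂_i`. -/
theorem stmt_1
    (n : ℕ) (hn : 2 ≤ n)
    (d : ℕ → ℝ) (hd : ∀ i ∈ Finset.Icc 1 n, 0 ≤ d i)
    (h : ℝ → ℝ) (hh0 : ∀ u ∈ Set.Icc (0:ℝ) 1, 0 ≤ h u)
    (hhmono : MonotoneOn h (Set.Icc 0 1))
    (hhint : IntegrableOn h (Set.Icc 0 1))
    (hc1 : d 1 ≤ ∫ u in (0:ℝ)..1, h u)
    (hc2 : ∀ i, 2 ≤ i → i ≤ n → ∀ q ∈ Set.Icc (0:ℝ) 1,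
      d i ≤ (∫ u in (0:ℝ)..q, h u) + (1 - q) * d (i-1))
    (hc3 : (∫ u in (0:ℝ)..1, h u * Pn' n (1-u)) = 1)
    (α₁ : ℝ) (hα₁ : 0 ≤ α₁)
    (α : ℕ → ℝ → ℝ)
    (hα0 : ∀ i, 2 ≤ i → i ≤ n → ∀ q ∈ Set.Icc (0:ℝ) 1, 0 ≤ α i q)
    (hαint : ∀ i, 2 ≤ i → i ≤ n → IntegrableOn (α i) (Set.Icc 0 1))
    (η η' : ℝ → ℝ)
    (hη0 : ∀ u ∈ Set.Icc (0:ℝ) 1, 0 ≤ η u)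
    (hηderiv : ∀ u ∈ Set.Icc (0:ℝ) 1, HasDerivAt η (η' u) u)
    (hη'cont : ContinuousOn η' (Set.Icc 0 1))
    (hη1 : η 1 = 0)
    (ζ : ℝ)
    (hdual1 : α₁ ≥ (∫ q in (0:ℝ)..1, (1-q) * α 2 q) + 1)
    (hdual2 : ∀ i, 2 ≤ i → i ≤ n-1 →
      (∫ q in (0:ℝ)..1, α i q) ≥ (∫ q in (0:ℝ)..1, (1-q) * α (i+1) q) + 1)
    (hdual3 : (∫ q in (0:ℝ)..1, α n q) ≥ 1)
    (hdual4 : ∀ u ∈ Set.Icc (0:ℝ) 1,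
      ζ * Pn' n (1-u) + η' u ≥ α₁ + ∑ i ∈ Finset.Icc 2 n, ∫ q in u..(1:ℝ), α i q) :
    ζ ≥ ∑ i ∈ Finset.Icc 1 n, d i := by
  have h01 : (0:ℝ) ≤ 1 := by norm_num
  have toII : ∀ {f : ℝ → ℝ}, IntegrableOn f (Set.Icc 0 1) → IntervalIntegrable f volume 0 1 :=
    fun hf => (intervalIntegrable_iff_integrableOn_Icc_of_le h01).mpr hf
  -- continuity of the primitive G q = ∫_0^q h
  have hGcont : ContinuousOn (fun q => ∫ u in (0:ℝ)..q, h u) (Set.Icc 0 1) := by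
    have := intervalIntegral.continuousOn_primitive_interval (a := 0) (b := 1) (f := h)
      (μ := volume) (by rwa [Set.uIcc_of_le h01])
    rwa [Set.uIcc_of_le h01] at this
  -- continuity of the tails A i u = ∫_u^1 α i
  have hAcont : ∀ i, 2 ≤ i → i ≤ n →
      ContinuousOn (fun u => ∫ q in u..(1:ℝ), α i q) (Set.Icc 0 1) := by
    intro i h2 hn'
    have hint := hαint i h2 hn'
    have hprim : ContinuousOn (fun u => ∫ q in (0:ℝ)..u, α i q) (Set.Icc 0 1) := by
      have := intervalIntegral.continuousOn_primitive_interval (a := 0) (b := 1) (f := α i)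
        (μ := volume) (by rwa [Set.uIcc_of_le h01])
      rwa [Set.uIcc_of_le h01] at this
    refine ContinuousOn.congr
      (f := fun u => (∫ q in (0:ℝ)..1, α i q) - ∫ q in (0:ℝ)..u, α i q)
      (continuousOn_const.sub hprim) ?_
    intro u hu
    have i1 : IntervalIntegrable (α i) volume 0 u :=
      (intervalIntegrable_iff_integrableOn_Icc_of_le hu.1).mpr
        (hint.mono_set (Set.Icc_subset_Icc_right hu.2))
    have i2 : IntervalIntegrable (α i) volume u 1 :=
      (intervalIntegrable_iff_integrableOn_Icc_of_le hu.2).mpr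
        (hint.mono_set (Set.Icc_subset_Icc_left hu.1))
    have := intervalIntegral.integral_add_adjacent_intervals i1 i2
    show (∫ q in u..(1:ℝ), α i q) = (∫ q in (0:ℝ)..1, α i q) - ∫ q in (0:ℝ)..u, α i q
    linarith
  -- integrabilities
  have hPncont : Continuous (fun u : ℝ => Pn' n (1-u)) := by
    unfold Pn'
    apply continuous_finset_sum
    intro i _
    fun_prop
  have hint1 : IntegrableOn (fun u => h u * Pn' n (1-u)) (Set.Icc 0 1) :=
    hhint.mul_continuousOn hPncont.continuousOn isCompact_Icc
  have hint2 : IntegrableOn (fun u => h u * η' u) (Set.Icc 0 1) :=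
    hhint.mul_continuousOn hη'cont isCompact_Icc
  have hintA : ∀ i ∈ Finset.Icc 2 n,
      IntegrableOn (fun u => h u * ∫ q in u..(1:ℝ), α i q) (Set.Icc 0 1) := by
    intro i hi
    rw [Finset.mem_Icc] at hi
    exact hhint.mul_continuousOn (hAcont i hi.1 hi.2) isCompact_Icc
  -- Step 1: ζ ≥ α₁ ∫h + ∑ᵢ ∫ h·Aᵢ
  have step1 : α₁ * (∫ u in (0:ℝ)..1, h u)
      + ∑ i ∈ Finset.Icc 2 n, (∫ u in (0:ℝ)..1, h u * ∫ q in u..(1:ℝ), α i q) ≤ ζ := by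
    have hg1int : IntegrableOn
        (fun u => ζ * (h u * Pn' n (1-u)) + h u * η' u) (Set.Icc 0 1) :=
      (hint1.const_mul ζ).add hint2
    have hg2int : IntegrableOn
        (fun u => α₁ * h u + ∑ i ∈ Finset.Icc 2 n, h u * ∫ q in u..(1:ℝ), α i q)
        (Set.Icc 0 1) :=
      (hhint.const_mul α₁).add (integrable_finset_sum _ (fun i hi => hintA i hi))
    have hmono : (∫ u in (0:ℝ)..1,
          (α₁ * h u + ∑ i ∈ Finset.Icc 2 n, h u * ∫ q in u..(1:ℝ), α i q))
        ≤ ∫ u in (0:ℝ)..1, (ζ * (h u * Pn' n (1-u)) + h u * η' u) := by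
      apply intervalIntegral.integral_mono_on h01 (toII hg2int) (toII hg1int)
      intro u hu
      have e1 : ζ * (h u * Pn' n (1-u)) + h u * η' u
          = h u * (ζ * Pn' n (1-u) + η' u) := by ring
      have e2 : α₁ * h u + ∑ i ∈ Finset.Icc 2 n, h u * ∫ q in u..(1:ℝ), α i q
          = h u * (α₁ + ∑ i ∈ Finset.Icc 2 n, ∫ q in u..(1:ℝ), α i q) := by
        rw [mul_add, Finset.mul_sum, mul_comm (h u) α₁]
      rw [e1, e2]
      exact mul_le_mul_of_nonneg_left (hdual4 u hu) (hh0 u hu)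
    have eL : (∫ u in (0:ℝ)..1, (ζ * (h u * Pn' n (1-u)) + h u * η' u))
        = ζ + ∫ u in (0:ℝ)..1, h u * η' u := by
      rw [intervalIntegral.integral_add ((toII hint1).const_mul ζ) (toII hint2),
        intervalIntegral.integral_const_mul, hc3, mul_one]
    have eR : (∫ u in (0:ℝ)..1,
          (α₁ * h u + ∑ i ∈ Finset.Icc 2 n, h u * ∫ q in u..(1:ℝ), α i q))
        = α₁ * (∫ u in (0:ℝ)..1, h u)
          + ∑ i ∈ Finset.Icc 2 n, (∫ u in (0:ℝ)..1, h u * ∫ q in u..(1:ℝ), α i q) := by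
      rw [intervalIntegral.integral_add ((toII hhint).const_mul α₁)
        (toII (integrable_finset_sum _ (fun i hi => hintA i hi))),
        intervalIntegral.integral_const_mul,
        intervalIntegral.integral_finset_sum (fun i hi => toII (hintA i hi))]
    have hkey := key_eta h hh0 hhmono hhint η η' hη0 hηderiv hη'cont hη1
    rw [eL] at hmono
    rw [eR] at hmono
    linarith
  -- Step 2: Fubini on each term
  have step2 : ∀ i ∈ Finset.Icc 2 n,
      (∫ u in (0:ℝ)..1, h u * ∫ q in u..(1:ℝ), α i q)
        = ∫ q in (0:ℝ)..1, α i q * ∫ u in (0:ℝ)..q, h u := by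
    intro i hi
    rw [Finset.mem_Icc] at hi
    exact fubini_tri h (α i) hhint (hαint i hi.1 hi.2)
  -- Step 3: integrated primal constraints
  have step3 : ∀ i ∈ Finset.Icc 2 n,
      (∫ q in (0:ℝ)..1, α i q) * d i
        ≤ (∫ q in (0:ℝ)..1, α i q * ∫ u in (0:ℝ)..q, h u)
          + (∫ q in (0:ℝ)..1, (1-q) * α i q) * d (i-1) := by
    intro i hi
    rw [Finset.mem_Icc] at hi
    have hintα := hαint i hi.1 hi.2
    have hintαG : IntegrableOn (fun q => α i q * ∫ u in (0:ℝ)..q, h u) (Set.Icc 0 1) :=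
      hintα.mul_continuousOn hGcont isCompact_Icc
    have hintq : IntegrableOn (fun q => (1-q) * α i q) (Set.Icc 0 1) :=
      IntegrableOn.continuousOn_mul (by fun_prop) hintα isCompact_Icc
    have hmono : (∫ q in (0:ℝ)..1, α i q * d i)
        ≤ ∫ q in (0:ℝ)..1,
            (α i q * ∫ u in (0:ℝ)..q, h u) + ((1-q) * α i q) * d (i-1) := by
      apply intervalIntegral.integral_mono_on h01 ((toII hintα).mul_const _)
        ((toII hintαG).add ((toII hintq).mul_const _))
      intro q hq
      have := hc2 i hi.1 hi.2 q hq
      have hα0' := hα0 i hi.1 hi.2 q hq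
      nlinarith [mul_le_mul_of_nonneg_left this hα0']
    rw [intervalIntegral.integral_mul_const] at hmono
    rw [intervalIntegral.integral_add (toII hintαG) ((toII hintq).mul_const _),
      intervalIntegral.integral_mul_const] at hmono
    exact hmono
  -- Step 4: finite-dimensional weak-duality algebra
  obtain ⟨m, rfl⟩ : ∃ m, n = m + 2 := ⟨n - 2, by omega⟩
  -- abbreviations in statements below are literal integrals
  have hsum1 : ∑ i ∈ Finset.Icc 2 (m+2),
        ((∫ q in (0:ℝ)..1, α i q) * d i - (∫ q in (0:ℝ)..1, (1-q) * α i q) * d (i-1))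
      ≤ ∑ i ∈ Finset.Icc 2 (m+2), (∫ q in (0:ℝ)..1, α i q * ∫ u in (0:ℝ)..q, h u) := by
    apply Finset.sum_le_sum
    intro i hi
    have := step3 i hi
    linarith
  have hre : ∑ i ∈ Finset.Icc 2 (m+2), (∫ q in (0:ℝ)..1, (1-q) * α i q) * d (i-1)
      = ∑ i ∈ Finset.Icc 1 (m+1), (∫ q in (0:ℝ)..1, (1-q) * α (i+1) q) * d i := by
    have hmap : Finset.Icc 2 (m+2) = Finset.map ⟨fun i => i+1, add_left_injective 1⟩
        (Finset.Icc 1 (m+1)) := by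
      ext x
      simp only [Finset.mem_Icc, Finset.mem_map, Function.Embedding.coeFn_mk]
      constructor
      · intro hx; exact ⟨x-1, by omega, by omega⟩
      · rintro ⟨a, ha, rfl⟩; omega
    rw [hmap, Finset.sum_map]
    simp
  have hd1 : 0 ≤ d 1 := hd 1 (Finset.mem_Icc.mpr (by omega))
  have hα₁H : (∫ q in (0:ℝ)..1, (1-q) * α 2 q) * d 1 + d 1
      ≤ α₁ * (∫ u in (0:ℝ)..1, h u) := by
    nlinarith [hc1, hdual1, hα₁, hd1]
  have hsplit1 : ∑ i ∈ Finset.Icc 2 (m+2), (∫ q in (0:ℝ)..1, α i q) * d i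
      = ∑ i ∈ Finset.Icc 2 (m+1), (∫ q in (0:ℝ)..1, α i q) * d i
        + (∫ q in (0:ℝ)..1, α (m+2) q) * d (m+2) :=
    Finset.sum_Icc_succ_top (by omega) _
  have hsplit2 : ∑ i ∈ Finset.Icc 1 (m+1), (∫ q in (0:ℝ)..1, (1-q) * α (i+1) q) * d i
      = (∫ q in (0:ℝ)..1, (1-q) * α 2 q) * d 1
        + ∑ i ∈ Finset.Icc 2 (m+1), (∫ q in (0:ℝ)..1, (1-q) * α (i+1) q) * d i := by
    rw [show Finset.Icc 1 (m+1) = insert 1 (Finset.Icc 2 (m+1)) from by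
      ext x; simp [Finset.mem_Icc]; omega, Finset.sum_insert (by simp)]
  have hmid : ∑ i ∈ Finset.Icc 2 (m+1), d i
      ≤ ∑ i ∈ Finset.Icc 2 (m+1), (∫ q in (0:ℝ)..1, α i q) * d i
        - ∑ i ∈ Finset.Icc 2 (m+1), (∫ q in (0:ℝ)..1, (1-q) * α (i+1) q) * d i := by
    rw [← Finset.sum_sub_distrib]
    apply Finset.sum_le_sum
    intro i hi
    rw [Finset.mem_Icc] at hi
    have h2 := hdual2 i hi.1 (by omega)
    have h3 := hd i (Finset.mem_Icc.mpr (by omega))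
    nlinarith
  have hlast : d (m+2) ≤ (∫ q in (0:ℝ)..1, α (m+2) q) * d (m+2) := by
    have h3 := hd (m+2) (Finset.mem_Icc.mpr (by omega))
    nlinarith [hdual3]
  have hgoal : ∑ i ∈ Finset.Icc 1 (m+2), d i
      = d 1 + ∑ i ∈ Finset.Icc 2 (m+1), d i + d (m+2) := by
    rw [Finset.sum_Icc_succ_top (by omega : 1 ≤ m+1+1),
      show Finset.Icc 1 (m+1) = insert 1 (Finset.Icc 2 (m+1)) from by
        ext x; simp [Finset.mem_Icc]; omega, Finset.sum_insert (by simp)]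
  -- combine everything
  have hsum2 : ∑ i ∈ Finset.Icc 2 (m+2),
        ((∫ q in (0:ℝ)..1, α i q) * d i - (∫ q in (0:ℝ)..1, (1-q) * α i q) * d (i-1))
      = ∑ i ∈ Finset.Icc 2 (m+2), (∫ q in (0:ℝ)..1, α i q) * d i
        - ∑ i ∈ Finset.Icc 2 (m+2), (∫ q in (0:ℝ)..1, (1-q) * α i q) * d (i-1) :=
    Finset.sum_sub_distrib _ _
  have e2 : ∑ i ∈ Finset.Icc 2 (m+2), (∫ u in (0:ℝ)..1, h u * ∫ q in u..(1:ℝ), α i q)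
      = ∑ i ∈ Finset.Icc 2 (m+2), (∫ q in (0:ℝ)..1, α i q * ∫ u in (0:ℝ)..q, h u) :=
    Finset.sum_congr rfl step2
  rw [hgoal]
  rw [e2] at step1
  linarith [hsum1, hsum2, hre, hsplit1, hsplit2, hmid, hlast, hα₁H, step1]
end

section
/- Fix an integer n ≥ 2, a real ζ > 0, and reals 0 ≤ ε_n < ε_{n−1} < … < ε_2 < ε_1 = 1. Define α_1 = ζ and α_i(q) = ζ·P_n''(1−q)·1_{[ε_i, ε_{i−1})}(q) for i = 2,…,n. If these satisfy with equality: α_1 = ∫_0^1 (1−q)·α_2(q) dq + 1; ∫_0^1 α_i(q) dq = ∫_0^1 (1−q)·α_{i+1}(q) dq + 1 for i = 2,…,n−1; and ∫_0^1 α_n(q) dq = 1; then for every j = 1,…,n−1 the recurrence (★) holds: P_n'(1−ε_{j+1}) − P_n'(1−ε_j) = ε_{j+1}·P_n'(1−ε_{j+1}) + P_n(1−ε_{j+1}) − j/ζ. -/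
open MeasureTheory Finset

/-- `P_n''(t) = ∑_{i=1}^n i (i-1) t^{i-2}`. -/
noncomputable def Pn'' (n : ℕ) (t : ℝ) : ℝ :=
  ∑ i ∈ Finset.Icc 1 n, (i : ℝ) * ((i : ℝ) - 1) * t ^ (i - 2)

lemma hasDerivAt_Pn (n : ℕ) (t : ℝ) : HasDerivAt (fun s => Pn n s) (Pn' n t) t := by
  unfold Pn Pn'
  exact HasDerivAt.fun_sum fun i hi => hasDerivAt_pow i t

lemma hasDerivAt_Pn' (n : ℕ) (t : ℝ) : HasDerivAt (fun s => Pn' n s) (Pn'' n t) t := by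
  unfold Pn' Pn''
  refine HasDerivAt.fun_sum fun i hi => ?_
  have h1 : 1 ≤ i := (Finset.mem_Icc.mp hi).1
  have h := (hasDerivAt_pow (i - 1) t).const_mul (i : ℝ)
  refine h.congr_deriv ?_
  have hc : ((i - 1 : ℕ) : ℝ) = (i : ℝ) - 1 := by push_cast [Nat.cast_sub h1]; ring
  rw [hc, Nat.sub_sub]
  ring

lemma cont_Pn'' (n : ℕ) : Continuous (fun t => Pn'' n t) := by
  unfold Pn''
  exact continuous_finset_sum _ fun i _ => by fun_prop

lemma Pn_zero (n : ℕ) : Pn n 0 = 0 := by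
  unfold Pn
  exact Finset.sum_eq_zero fun i hi => zero_pow (by have := (Finset.mem_Icc.mp hi).1; omega)

lemma Pn'_zero (n : ℕ) (hn : 1 ≤ n) : Pn' n 0 = 1 := by
  unfold Pn'
  rw [Finset.sum_eq_single 1]
  · norm_num
  · intro i hi h1
    have := (Finset.mem_Icc.mp hi).1
    have : i - 1 ≠ 0 := by omega
    simp [zero_pow this]
  · intro h; exact absurd (Finset.mem_Icc.mpr ⟨le_refl 1, hn⟩) h

lemma ind_int (a b : ℝ) (h0 : 0 ≤ a) (hab : a ≤ b) (hb1 : b ≤ 1) (f : ℝ → ℝ) :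
    ∫ q in (0:ℝ)..1, (Set.Ico a b).indicator f q = ∫ q in a..b, f q := by
  have hae : (Set.Ico a b).indicator f =ᵐ[volume] (Set.Ioc a b).indicator f :=
    indicator_ae_eq_of_ae_eq_set Ico_ae_eq_Ioc
  rw [intervalIntegral.integral_congr_ae (by filter_upwards [hae] with x hx using fun _ => hx)]
  rw [intervalIntegral.integral_of_le (by norm_num : (0:ℝ) ≤ 1),
    intervalIntegral.integral_of_le hab]
  rw [MeasureTheory.integral_indicator measurableSet_Ioc, Measure.restrict_restrict measurableSet_Ioc]
  congr 1
  rw [Set.inter_eq_left.mpr]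
  intro x hx
  exact ⟨lt_of_le_of_lt h0 hx.1, le_trans hx.2 hb1⟩

lemma intA (n : ℕ) (ζ a b : ℝ) (h0 : 0 ≤ a) (hab : a ≤ b) (hb1 : b ≤ 1) :
    ∫ q in (0:ℝ)..1, (Set.Ico a b).indicator (fun q' => ζ * Pn'' n (1 - q')) q
      = ζ * (Pn' n (1 - a) - Pn' n (1 - b)) := by
  rw [ind_int a b h0 hab hb1]
  have hd : ∀ q ∈ Set.uIcc a b,
      HasDerivAt (fun q => -(ζ * Pn' n (1 - q))) (ζ * Pn'' n (1 - q)) q := by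
    intro q _
    have h1 : HasDerivAt (fun x : ℝ => 1 - x) (-1) q := (hasDerivAt_id q).const_sub 1
    have h2 := ((hasDerivAt_Pn' n (1 - q)).comp q h1).const_mul ζ
    exact h2.neg.congr_deriv (by ring)
  have hint : IntervalIntegrable (fun q => ζ * Pn'' n (1 - q)) volume a b :=
    (Continuous.intervalIntegrable (by have := cont_Pn'' n; fun_prop)) a b
  rw [intervalIntegral.integral_eq_sub_of_hasDerivAt hd hint]
  ring

lemma intB (n : ℕ) (ζ a b : ℝ) (h0 : 0 ≤ a) (hab : a ≤ b) (hb1 : b ≤ 1) :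
    ∫ q in (0:ℝ)..1, (1 - q) * (Set.Ico a b).indicator (fun q' => ζ * Pn'' n (1 - q')) q
      = ζ * ((1 - a) * Pn' n (1 - a) - Pn n (1 - a)
          - ((1 - b) * Pn' n (1 - b) - Pn n (1 - b))) := by
  have hpt : ∀ q : ℝ, (1 - q) * (Set.Ico a b).indicator (fun q' => ζ * Pn'' n (1 - q')) q
      = (Set.Ico a b).indicator (fun q' => (1 - q') * (ζ * Pn'' n (1 - q'))) q := by
    intro q
    rw [Set.indicator_apply, Set.indicator_apply]
    split_ifs <;> simp
  simp only [hpt]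
  rw [ind_int a b h0 hab hb1]
  have hd : ∀ q ∈ Set.uIcc a b,
      HasDerivAt (fun q => -(ζ * ((1 - q) * Pn' n (1 - q) - Pn n (1 - q))))
        ((1 - q) * (ζ * Pn'' n (1 - q))) q := by
    intro q _
    have h1 : HasDerivAt (fun x : ℝ => 1 - x) (-1) q := (hasDerivAt_id q).const_sub 1
    have h2 := (hasDerivAt_Pn' n (1 - q)).comp q h1
    have h3 := h1.mul h2
    have h4 := (hasDerivAt_Pn n (1 - q)).comp q h1
    have h5 := ((h3.sub h4).const_mul ζ).neg
    exact h5.congr_deriv (by simp [Function.comp]; ring)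
  have hint : IntervalIntegrable (fun q => (1 - q) * (ζ * Pn'' n (1 - q))) volume a b :=
    (Continuous.intervalIntegrable (by have := cont_Pn'' n; fun_prop)) a b
  rw [intervalIntegral.integral_eq_sub_of_hasDerivAt hd hint]
  ring

/-- If the proposed dual solution
`α_1 = ζ`, `α_i(q) = ζ P_n''(1-q) 1_{[ε_i, ε_{i-1})}(q)` satisfies the dual constraints
with equality, then the quantiles `ε_j` satisfy the recurrence (★). -/
theorem stmt_2
    (n : ℕ) (hn : 2 ≤ n) (ζ : ℝ) (hζ : 0 < ζ)
    (ε : ℕ → ℝ) (hε1 : ε 1 = 1) (hεn : 0 ≤ ε n)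
    (hdec : ∀ j, 1 ≤ j → j < n → ε (j+1) < ε j)
    (α : ℕ → ℝ → ℝ)
    (hα : ∀ i, 2 ≤ i → i ≤ n → ∀ q : ℝ,
      α i q = Set.indicator (Set.Ico (ε i) (ε (i-1))) (fun q' => ζ * Pn'' n (1-q')) q)
    (heq1 : ζ = (∫ q in (0:ℝ)..1, (1-q) * α 2 q) + 1)
    (heq2 : ∀ i, 2 ≤ i → i ≤ n-1 →
      (∫ q in (0:ℝ)..1, α i q) = (∫ q in (0:ℝ)..1, (1-q) * α (i+1) q) + 1)
    (heq3 : (∫ q in (0:ℝ)..1, α n q) = 1) :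
    ∀ j, 1 ≤ j → j ≤ n - 1 →
      Pn' n (1 - ε (j+1)) - Pn' n (1 - ε j)
        = ε (j+1) * Pn' n (1 - ε (j+1)) + Pn n (1 - ε (j+1)) - (j : ℝ) / ζ := by
  -- monotonicity / bounds
  have hmono : ∀ i j, 1 ≤ i → i ≤ j → j ≤ n → ε j ≤ ε i := by
    intro i j hi hij hjn
    induction j with
    | zero => omega
    | succ k ih =>
      rcases Nat.lt_or_ge i (k+1) with h | h
      · have hk : ε (k+1) < ε k := hdec k (by omega) (by omega)
        exact le_trans hk.le (ih (by omega) (by omega))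
      · have : i = k + 1 := by omega
        rw [this]
  have hbnd : ∀ i, 1 ≤ i → i ≤ n → 0 ≤ ε i ∧ ε i ≤ 1 := by
    intro i h1 h2
    constructor
    · exact le_trans hεn (hmono i n h1 h2 le_rfl)
    · rw [← hε1]; exact hmono 1 i le_rfl h1 h2
  -- the key claim, proved by induction
  have claim : ∀ j, 1 ≤ j → j ≤ n - 1 →
      (1 - ε (j+1)) * Pn' n (1 - ε (j+1)) - Pn n (1 - ε (j+1)) - Pn' n (1 - ε j)
        = -(j : ℝ) / ζ := by
    intro j hj1
    induction j, hj1 using Nat.le_induction with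
    | base =>
      intro hk
      have hb2 := hbnd 2 (by omega) hn
      have h12 : ε 2 ≤ ε 1 := (hdec 1 le_rfl (by omega)).le
      have hint := intB n ζ (ε 2) (ε 1) hb2.1 h12 (by rw [hε1])
      have hα2 : ∀ q : ℝ, α 2 q
          = Set.indicator (Set.Ico (ε 2) (ε 1)) (fun q' => ζ * Pn'' n (1-q')) q := by
        have := hα 2 le_rfl hn
        simpa using this
      rw [show (∫ q in (0:ℝ)..1, (1-q) * α 2 q)
          = ∫ q in (0:ℝ)..1, (1-q) * (Set.Ico (ε 2) (ε 1)).indicator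
              (fun q' => ζ * Pn'' n (1-q')) q from by
        congr 1; funext q; rw [hα2 q]] at heq1
      rw [hint] at heq1
      norm_num
      rw [hε1] at heq1 ⊢
      simp only [sub_self, Pn_zero, zero_mul, sub_zero, mul_zero, zero_sub, neg_zero] at heq1 ⊢
      have hζ' : ζ ≠ 0 := ne_of_gt hζ
      rw [Pn'_zero n (by omega)]
      field_simp
      linarith [heq1]
    | succ k hkpos ih =>
      intro hk
      have hstep := heq2 (k+1) (by omega) (by omega)
      have hbk2 := hbnd (k+1+1) (by omega) (by omega)
      have hbk1 := hbnd (k+1) (by omega) (by omega)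
      have hbk := hbnd k hkpos (by omega)
      have h21 : ε (k+1+1) ≤ ε (k+1) := (hdec (k+1) (by omega) (by omega)).le
      have h10 : ε (k+1) ≤ ε k := (hdec k hkpos (by omega)).le
      have hA := intA n ζ (ε (k+1)) (ε k) hbk1.1 h10 hbk.2
      have hB := intB n ζ (ε (k+1+1)) (ε (k+1)) hbk2.1 h21 hbk1.2
      rw [show (∫ q in (0:ℝ)..1, α (k+1) q)
          = ∫ q in (0:ℝ)..1, (Set.Ico (ε (k+1)) (ε k)).indicator
              (fun q' => ζ * Pn'' n (1-q')) q from by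
        congr 1; funext q
        rw [hα (k+1) (by omega) (by omega) q]
        norm_num] at hstep
      rw [show (∫ q in (0:ℝ)..1, (1-q) * α (k+1+1) q)
          = ∫ q in (0:ℝ)..1, (1-q) * (Set.Ico (ε (k+1+1)) (ε (k+1))).indicator
              (fun q' => ζ * Pn'' n (1-q')) q from by
        congr 1; funext q
        rw [hα (k+1+1) (by omega) (by omega) q]
        norm_num] at hstep
      rw [hA, hB] at hstep
      have hih := ih (by omega)
      have hζ' : ζ ≠ 0 := ne_of_gt hζ
      push_cast at hih ⊢
      field_simp at hih hstep ⊢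
      nlinarith [hih, hstep]
  intro j hj1 hj2
  have := claim j hj1 hj2
  have hζ' : ζ ≠ 0 := ne_of_gt hζ
  field_simp at this ⊢
  nlinarith [this]
end

section
/- Let q > 1, a > 0, 0 < β ≤ 1, and let j ≥ 1 be an integer. Then for every integer k with 0 ≤ k ≤ j−1: (β(q²−1)/(2q²))·Σ_{l=k}^j q^{−(2l−k)}·⌊a·q^l + l + 2 − a/q⌋ ≤ aβ(q+1)/(2q) + (β/(2q^k))·(k + 2 − a/q + 1/(q²−1)). Moreover, (β/(2q^j))·⌊a·q^j + j + 2 − a/q⌋ ≤ aβ/2 + (β/(2q^j))·(j + 2 − a/q). -/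
open Finset

set_option maxHeartbeats 1600000 in
/-- The expected contract costs `C(k)` of the quantile-based algorithm for
the uniform distribution are bounded by the simplified upper bounds `C̃(k)`. -/
theorem stmt_6
    (q a β : ℝ) (hq : 1 < q) (ha : 0 < a) (hβ0 : 0 < β) (hβ1 : β ≤ 1)
    (j : ℕ) (hj : 1 ≤ j) :
    (∀ k : ℕ, k ≤ j - 1 →
      β * (q^2 - 1) / (2*q^2) *
          ∑ l ∈ Finset.Icc k j, (q ^ (2*l - k))⁻¹ * (⌊a * q^l + (l:ℝ) + 2 - a/q⌋ : ℝ)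
        ≤ a*β*(q+1)/(2*q) + β/(2*q^k) * ((k:ℝ) + 2 - a/q + 1/(q^2-1)))
    ∧ β/(2*q^j) * (⌊a * q^j + (j:ℝ) + 2 - a/q⌋ : ℝ)
        ≤ a*β/2 + β/(2*q^j) * ((j:ℝ) + 2 - a/q) := by
  have hq0 : (0:ℝ) < q := lt_trans one_pos hq
  have hqne : q ≠ 0 := hq0.ne'
  have hq21 : (1:ℝ) < q^2 := one_lt_pow₀ hq (by norm_num)
  have hq21ne : q^2 - 1 ≠ 0 := by nlinarith
  set s : ℝ := q⁻¹ with hs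
  set r : ℝ := (q^2)⁻¹ with hr
  have hs0 : 0 < s := inv_pos.mpr hq0
  have hs1 : s < 1 := by rw [hs]; exact inv_lt_one_of_one_lt₀ hq
  have hr0 : 0 < r := inv_pos.mpr (by positivity)
  have hr1 : r < 1 := by rw [hr]; exact inv_lt_one_of_one_lt₀ hq21
  have h1s : (1:ℝ) - s ≠ 0 := by nlinarith
  have h1r : (1:ℝ) - r ≠ 0 := by nlinarith
  constructor
  · intro k hk
    have hkj : k ≤ j := le_trans hk (Nat.sub_le j 1)
    set c : ℝ := (k:ℝ) + 2 - a/q with hc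
    set g : ℕ → ℝ := fun m => a * s^m + (q^k)⁻¹ * c * r^m + (q^k)⁻¹ * ((m:ℝ) * r^m) with hg
    have hgeq : ∀ m : ℕ, g m
        = (q ^ (k + 2*m))⁻¹ * (a * q^(k+m) + ((k:ℝ) + (m:ℝ)) + 2 - a/q) := by
      intro m
      simp only [hg, hc, hs, hr]
      rw [← inv_pow, ← inv_pow]
      field_simp
      ring_nf
      simp only [inv_pow, ← pow_mul, mul_comm m 2]
      field_simp
      ring
    have hgnonneg : ∀ m : ℕ, 0 ≤ g m := by
      intro m
      rw [hgeq m]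
      have h1 : (1:ℝ) ≤ q ^ (k+m) := one_le_pow₀ hq.le
      have h2 : a/q ≤ a := by rw [div_le_iff₀ hq0]; nlinarith
      have h3 : a ≤ a * q ^ (k+m) := by nlinarith
      have h4 : (0:ℝ) ≤ a * q^(k+m) + ((k:ℝ) + (m:ℝ)) + 2 - a/q := by
        have hm : (0:ℝ) ≤ (k:ℝ) + (m:ℝ) := by positivity
        nlinarith
      exact mul_nonneg (by positivity) h4
    -- summability
    have hsum1 : Summable (fun m : ℕ => a * s^m) :=
      (summable_geometric_of_lt_one hs0.le hs1).mul_left a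
    have hsum2 : Summable (fun m : ℕ => (q^k)⁻¹ * c * r^m) :=
      (summable_geometric_of_lt_one hr0.le hr1).mul_left _
    have hsum3' : Summable (fun m : ℕ => (m:ℝ) * r^m) := by
      have := summable_pow_mul_geometric_of_norm_lt_one 1 (r := r)
        (by rw [Real.norm_eq_abs, abs_of_pos hr0]; exact hr1)
      simpa using this
    have hsum3 : Summable (fun m : ℕ => (q^k)⁻¹ * ((m:ℝ) * r^m)) := hsum3'.mul_left _
    have hg_summable : Summable g := (hsum1.add hsum2).add hsum3
    have htsum : ∑' m, g m
        = a * (1-s)⁻¹ + (q^k)⁻¹ * c * (1-r)⁻¹ + (q^k)⁻¹ * (r/(1-r)^2) := by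
      rw [hg]
      rw [Summable.tsum_add (hsum1.add hsum2) hsum3, Summable.tsum_add hsum1 hsum2,
        tsum_mul_left, tsum_mul_left, tsum_mul_left,
        tsum_geometric_of_lt_one hs0.le hs1, tsum_geometric_of_lt_one hr0.le hr1,
        tsum_coe_mul_geometric_of_norm_lt_one
          (by rw [Real.norm_eq_abs, abs_of_pos hr0]; exact hr1)]
    have hfin : ∑ l ∈ Finset.Icc k j, (q ^ (2*l - k))⁻¹ * (⌊a * q^l + (l:ℝ) + 2 - a/q⌋ : ℝ)
        ≤ a * (1-s)⁻¹ + (q^k)⁻¹ * c * (1-r)⁻¹ + (q^k)⁻¹ * (r/(1-r)^2) := by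
      calc ∑ l ∈ Finset.Icc k j, (q ^ (2*l - k))⁻¹ * (⌊a * q^l + (l:ℝ) + 2 - a/q⌋ : ℝ)
          ≤ ∑ l ∈ Finset.Icc k j, (q ^ (2*l - k))⁻¹ * (a * q^l + (l:ℝ) + 2 - a/q) := by
            apply Finset.sum_le_sum
            intro l hl
            have : (0:ℝ) ≤ (q ^ (2*l - k))⁻¹ := by positivity
            exact mul_le_mul_of_nonneg_left (Int.floor_le _) this
        _ = ∑ m ∈ Finset.range (j + 1 - k), g m := by
            rw [← Finset.Ico_add_one_right_eq_Icc, Finset.sum_Ico_eq_sum_range]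
            apply Finset.sum_congr rfl
            intro m hm
            rw [hgeq m]
            have h2 : 2 * (k + m) - k = k + 2*m := by omega
            rw [h2]
            push_cast
            ring_nf
        _ ≤ ∑' m, g m := hg_summable.sum_le_tsum _ (fun m _ => hgnonneg m)
        _ = _ := htsum
    have hfac : (0:ℝ) ≤ β * (q^2 - 1) / (2*q^2) :=
      div_nonneg (mul_nonneg hβ0.le (by nlinarith)) (by positivity)
    calc β * (q^2 - 1) / (2*q^2) *
          ∑ l ∈ Finset.Icc k j, (q ^ (2*l - k))⁻¹ * (⌊a * q^l + (l:ℝ) + 2 - a/q⌋ : ℝ)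
        ≤ β * (q^2 - 1) / (2*q^2) *
          (a * (1-s)⁻¹ + (q^k)⁻¹ * c * (1-r)⁻¹ + (q^k)⁻¹ * (r/(1-r)^2)) :=
          mul_le_mul_of_nonneg_left hfin hfac
      _ = a*β*(q+1)/(2*q) + β/(2*q^k) * ((k:ℝ) + 2 - a/q + 1/(q^2-1)) := by
          have hq1 : q - 1 ≠ 0 := by nlinarith
          have hqk : (q:ℝ)^k ≠ 0 := by positivity
          have e1 : (1 - s)⁻¹ = q/(q-1) := by
            rw [hs, show (1 - q⁻¹) = (q-1)/q by field_simp, inv_div]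
          have e2 : (1 - r)⁻¹ = q^2/(q^2-1) := by
            rw [hr, show (1 - (q^2)⁻¹) = (q^2-1)/q^2 by field_simp, inv_div]
          have e3 : r/(1-r)^2 = q^2/(q^2-1)^2 := by
            rw [hr, show (1 - (q^2)⁻¹) = (q^2-1)/q^2 by field_simp, div_pow,
              div_div_eq_mul_div]
            congr 1
            rw [sq ((q:ℝ)^2), inv_mul_cancel_left₀ (pow_ne_zero 2 hqne)]
          rw [e1, e2, e3, hc]
          have hq21ne' : (q^2-1)^2 ≠ 0 := pow_ne_zero 2 hq21ne
          field_simp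
          ring
  · have h := Int.floor_le (a * q^j + (j:ℝ) + 2 - a/q)
    have hpos : (0:ℝ) ≤ β/(2*q^j) := by positivity
    calc β/(2*q^j) * (⌊a * q^j + (j:ℝ) + 2 - a/q⌋ : ℝ)
        ≤ β/(2*q^j) * (a * q^j + (j:ℝ) + 2 - a/q) := mul_le_mul_of_nonneg_left h hpos
      _ = a*β/2 + β/(2*q^j) * ((j:ℝ) + 2 - a/q) := by
          have hqj : (q:ℝ)^j ≠ 0 := by positivity
          field_simp
          ring
end

section
/- Let j ≥ 2 be an integer, 0 < β ≤ 1, q > 1, let C_0,…,C_j ≥ 0 satisfy q·C_k ≥ C_{k+1} for k = 0,…,j−1, let p_1,…,p_j ∈ (0,1], and let p̃ ∈ (0,1] satisfy p̃ ≤ p_k for all k = 1,…,j. For a vector of probabilities π = (π_1,…,π_j), let V(π) be the supremum of d_0 over all (d_0,…,d_{j+1}) ∈ [0,∞)^{j+2} satisfying: d_0 ≤ (1−β²)/(2β) + C_0 + Σ_{l=1}^j ((q−1)/q^l)·d_l + (1/q^j)·d_{j+1}; d_k ≤ (1−π_k)·d_{k−1} + π_k·(C_k + Σ_{l=1}^{j−k}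 ((q−1)/q^l)·d_{k+l} + (1/q^{j−k})·d_{j+1}) for k = 1,…,j−1; d_j ≤ (1−π_j)·d_{j−1} + π_j·(C_j + d_{j+1}); and d_{j+1} ≤ 0. Then V(p_1,…,p_j) ≤ V(p̃,…,p̃). -/
open Finset

/-- Feasibility for the linear program `(LP)_Unif(π, C)`. -/
def FeasUnif (j : ℕ) (q β : ℝ) (C : ℕ → ℝ) (π : ℕ → ℝ) (d : ℕ → ℝ) : Prop :=
  (∀ k ≤ j + 1, 0 ≤ d k) ∧
  d 0 ≤ (1 - β^2)/(2*β) + C 0 + (∑ l ∈ Finset.Icc 1 j, (q-1)/q^l * d l)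
      + (1/q^j) * d (j+1) ∧
  (∀ k, 1 ≤ k → k ≤ j - 1 →
    d k ≤ (1 - π k) * d (k-1)
      + π k * (C k + (∑ l ∈ Finset.Icc 1 (j-k), (q-1)/q^l * d (k+l))
          + (1/q^(j-k)) * d (j+1))) ∧
  d j ≤ (1 - π j) * d (j-1) + π j * (C j + d (j+1)) ∧
  d (j+1) ≤ 0

/-- The optimal value `V(π)` of the linear program `(LP)_Unif(π, C)`:
the supremum of `d_0` over all feasible solutions. -/
noncomputable def Vval (j : ℕ) (q β : ℝ) (C : ℕ → ℝ) (π : ℕ → ℝ) : ℝ :=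
  sSup {x | ∃ d : ℕ → ℝ, FeasUnif j q β C π d ∧ d 0 = x}

lemma geom_aux (q : ℝ) (hq : 1 < q) (m : ℕ) :
    ∑ l ∈ Finset.Icc 1 m, (q-1)/q^l = 1 - 1/q^m := by
  have hq0 : (0:ℝ) < q := by linarith
  induction m with
  | zero => simp
  | succ n ih =>
    rw [Finset.sum_Icc_succ_top (by omega), ih]
    have h1 : q ≠ 0 := ne_of_gt hq0
    field_simp
    ring

lemma sumw_le (q : ℝ) (hq : 1 < q) (f : ℕ → ℝ) (m : ℕ) (mx : ℝ)
    (h : ∀ l ∈ Finset.Icc 1 m, f l ≤ mx) :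
    ∑ l ∈ Finset.Icc 1 m, (q-1)/q^l * f l ≤ (1 - 1/q^m) * mx := by
  have hq0 : (0:ℝ) < q := by linarith
  calc ∑ l ∈ Icc 1 m, (q-1)/q^l * f l ≤ ∑ l ∈ Icc 1 m, (q-1)/q^l * mx :=
        Finset.sum_le_sum (fun l hl => mul_le_mul_of_nonneg_left (h l hl)
          (div_nonneg (by linarith) (pow_nonneg hq0.le l)))
    _ = (∑ l ∈ Icc 1 m, (q-1)/q^l) * mx := by rw [Finset.sum_mul]
    _ = (1 - 1/q^m) * mx := by rw [geom_aux q hq]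

lemma feas_bound (j : ℕ) (hj : 2 ≤ j) (q β : ℝ) (hq : 1 < q) (hβ0 : 0 < β) (hβ1 : β ≤ 1)
    (C : ℕ → ℝ) (hC0 : ∀ k ≤ j, 0 ≤ C k)
    (π : ℕ → ℝ) (hπ : ∀ k, 1 ≤ k → k ≤ j → π k ∈ Set.Ioc (0:ℝ) 1)
    (d : ℕ → ℝ) (hd : FeasUnif j q β C π d) :
    ∀ k ≤ j, d k ≤ ((1-β^2)/(2*β) + ∑ i ∈ Finset.Icc 0 j, C i) * q^j := by
  obtain ⟨hnn, h0, hmid, hjc, hj1⟩ := hd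
  have hq0 : (0:ℝ) < q := by linarith
  have hQj : (0:ℝ) < q^j := pow_pos hq0 j
  have hdj1 : d (j+1) = 0 := le_antisymm hj1 (hnn _ le_rfl)
  have hc : 0 ≤ (1-β^2)/(2*β) := div_nonneg (by nlinarith) (by linarith)
  have hCS : 0 ≤ ∑ i ∈ Finset.Icc 0 j, C i :=
    Finset.sum_nonneg (fun i hi => hC0 i (by simpa using (Finset.mem_Icc.mp hi).2))
  have hCle : ∀ i ≤ j, C i ≤ ∑ i ∈ Finset.Icc 0 j, C i := fun i hi =>
    Finset.single_le_sum (f := C) (fun i hi => hC0 i (by simpa using (Finset.mem_Icc.mp hi).2))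
      (by simp [Finset.mem_Icc, hi])
  obtain ⟨k0, hk0m, hmax⟩ := Finset.exists_max_image (Finset.Icc 0 j) d ⟨0, by simp⟩
  have hk0j : k0 ≤ j := by simpa using (Finset.mem_Icc.mp hk0m).2
  have hmax' : ∀ k ≤ j, d k ≤ d k0 := fun k hk => hmax k (by simp [Finset.mem_Icc, hk])
  have hm0 : 0 ≤ d k0 := le_trans (hnn 0 (by omega)) (hmax' 0 (by omega))
  set m := d k0 with hmdef
  suffices hkey : m ≤ ((1-β^2)/(2*β) + ∑ i ∈ Finset.Icc 0 j, C i) * q^j by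
    intro k hk; exact le_trans (hmax' k hk) hkey
  have hqj1 : (1:ℝ) ≤ q^j := one_le_pow₀ hq.le
  rcases (by omega : k0 = 0 ∨ (1 ≤ k0 ∧ k0 ≤ j - 1) ∨ k0 = j) with h | ⟨h1, h2⟩ | h
  · -- k0 = 0
    subst h
    have hx := h0
    rw [hdj1] at hx
    have hsum : ∑ l ∈ Finset.Icc 1 j, (q-1)/q^l * d l ≤ (1 - 1/q^j) * m :=
      sumw_le q hq d j m (fun l hl => hmax' l (Finset.mem_Icc.mp hl).2)
    have hx2 : m * (1/q^j) ≤ (1-β^2)/(2*β) + C 0 := by nlinarith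
    have hx3 : m ≤ ((1-β^2)/(2*β) + C 0) * q^j := by
      have := mul_le_mul_of_nonneg_right hx2 hQj.le
      have he : m * (1/q^j) * q^j = m := by field_simp
      linarith [he ▸ this]
    calc m ≤ ((1-β^2)/(2*β) + C 0) * q^j := hx3
      _ ≤ ((1-β^2)/(2*β) + ∑ i ∈ Finset.Icc 0 j, C i) * q^j := by
          have := hCle 0 (by omega)
          nlinarith
  · -- middle
    have hπk := hπ k0 h1 (by omega)
    have hx := hmid k0 h1 h2
    rw [hdj1] at hx
    have hsum : ∑ l ∈ Finset.Icc 1 (j-k0), (q-1)/q^l * d (k0+l) ≤ (1 - 1/q^(j-k0)) * m := by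
      have : ∀ l ∈ Finset.Icc 1 (j-k0), (fun l => d (k0 + l)) l ≤ m := by
        intro l hl
        exact hmax' (k0 + l) (by have := (Finset.mem_Icc.mp hl).2; omega)
      exact sumw_le q hq (fun l => d (k0 + l)) (j-k0) m this
    have hdk1 : d (k0 - 1) ≤ m := hmax' _ (by omega)
    have hQ : (0:ℝ) < q^(j-k0) := pow_pos hq0 _
    have hπ0 : 0 < π k0 := hπk.1
    have hπ1 : π k0 ≤ 1 := hπk.2
    -- m ≤ (1-π)d(k0-1) + π(C k0 + S + 0)
    have hx2 : π k0 * (m * (1/q^(j-k0))) ≤ π k0 * C k0 := by nlinarith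
    have hx3 : m * (1/q^(j-k0)) ≤ C k0 := le_of_mul_le_mul_left hx2 hπ0
    have hx4 : m ≤ C k0 * q^(j-k0) := by
      have := mul_le_mul_of_nonneg_right hx3 hQ.le
      have he : m * (1/q^(j-k0)) * q^(j-k0) = m := by field_simp
      linarith [he ▸ this]
    have hQle : q^(j-k0) ≤ q^j := pow_le_pow_right₀ hq.le (by omega)
    calc m ≤ C k0 * q^(j-k0) := hx4
      _ ≤ (∑ i ∈ Finset.Icc 0 j, C i) * q^j :=
          mul_le_mul (hCle k0 (by omega)) hQle hQ.le hCS
      _ ≤ ((1-β^2)/(2*β) + ∑ i ∈ Finset.Icc 0 j, C i) * q^j := by nlinarith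
  · -- k0 = j
    subst h
    have hπk := hπ k0 (by omega) le_rfl
    have hx := hjc
    rw [hdj1] at hx
    have hdk1 : d (k0 - 1) ≤ m := hmax' _ (by omega)
    have hx2 : π k0 * m ≤ π k0 * C k0 := by nlinarith [hπk.1, hπk.2]
    have hx3 : m ≤ C k0 := le_of_mul_le_mul_left hx2 hπk.1
    calc m ≤ C k0 := hx3
      _ ≤ ∑ i ∈ Finset.Icc 0 k0, C i := hCle k0 le_rfl
      _ ≤ ((1-β^2)/(2*β) + ∑ i ∈ Finset.Icc 0 k0, C i) * q^k0 := by nlinarith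

lemma mul_split (q x y z w : ℝ) (hq : q ≠ 0)
    (h : x = y + ((q-1)/q * z + (1/q) * w)) : q * x = q * y + (q-1) * z + w := by
  rw [h]; field_simp; ring

lemma zero_feas (j : ℕ) (hj : 1 ≤ j) (q β : ℝ) (hq : 1 < q) (hβ0 : 0 < β) (hβ1 : β ≤ 1)
    (C : ℕ → ℝ) (hC0 : ∀ k ≤ j, 0 ≤ C k)
    (π : ℕ → ℝ) (hπ : ∀ k, 1 ≤ k → k ≤ j → π k ∈ Set.Ioc (0:ℝ) 1) :
    FeasUnif j q β C π (fun _ => 0) := by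
  have hc : 0 ≤ (1-β^2)/(2*β) := div_nonneg (by nlinarith) (by linarith)
  refine ⟨fun k _ => le_rfl, ?_, ?_, ?_, le_rfl⟩
  · simp only [mul_zero, add_zero, Finset.sum_const_zero]
    have := hC0 0 (by omega)
    linarith
  · intro k hk1 hkj
    simp only [mul_zero, add_zero, zero_add, Finset.sum_const_zero]
    have h2 := (hπ k hk1 (by omega)).1
    have h3 := hC0 k (by omega)
    positivity
  · simp only [mul_zero, add_zero]
    have h2 := (hπ j hj le_rfl).1
    have h3 := hC0 j le_rfl
    positivity


lemma split_aux (q : ℝ) (hq : 1 < q) (s : ℕ → ℝ) (k m : ℕ) (hm : 1 ≤ m) :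
    ∑ l ∈ Finset.Icc 1 m, (q-1)/q^l * s (k+l)
      = (q-1)/q * s (k+1) + (1/q) * ∑ l ∈ Finset.Icc 1 (m-1), (q-1)/q^l * s (k+1+l) := by
  have hq0 : (0:ℝ) < q := by linarith
  obtain ⟨n, rfl⟩ : ∃ n, m = n + 1 := ⟨m - 1, by omega⟩
  rw [← Finset.Ico_add_one_right_eq_Icc, ← Finset.Ico_add_one_right_eq_Icc, Finset.sum_Ico_eq_sum_range, Finset.sum_Ico_eq_sum_range]
  have hn1 : n + 1 + 1 - 1 = n + 1 := by omega
  have hn2 : n + 1 - 1 + 1 - 1 = n := by omega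
  rw [hn1, hn2]
  rw [Finset.sum_range_succ']
  rw [Finset.mul_sum]
  have h1 : (q-1)/q^(1+0) * s (k+(1+0)) = (q-1)/q * s (k+1) := by norm_num
  rw [h1]
  rw [add_comm ((q-1)/q * s (k+1))]
  congr 1
  apply Finset.sum_congr rfl
  intro i _
  have h2 : k + (1 + (i+1)) = k + 1 + (1 + i) := by omega
  rw [h2]
  have h3 : (q-1)/q^(1+(i+1)) = 1/q * ((q-1)/q^(1+i)) := by
    have : (1+(i+1)) = (1+i)+1 := by omega
    rw [this, pow_succ]
    ring
  rw [h3, mul_assoc]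

set_option maxHeartbeats 2000000 in
/-- Replacing the transition probabilities `p_1, …, p_j` by a uniform
lower bound `p̃` can only increase the optimal value of `(LP)_Unif`. -/
theorem stmt_7
    (j : ℕ) (hj : 2 ≤ j) (q β : ℝ) (hq : 1 < q) (hβ0 : 0 < β) (hβ1 : β ≤ 1)
    (C : ℕ → ℝ) (hC0 : ∀ k ≤ j, 0 ≤ C k)
    (hCq : ∀ k, k ≤ j - 1 → q * C k ≥ C (k+1))
    (p : ℕ → ℝ) (hp : ∀ k, 1 ≤ k → k ≤ j → p k ∈ Set.Ioc (0:ℝ) 1)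
    (pt : ℝ) (hpt : pt ∈ Set.Ioc (0:ℝ) 1)
    (hple : ∀ k, 1 ≤ k → k ≤ j → pt ≤ p k) :
    Vval j q β C p ≤ Vval j q β C (fun _ => pt) := by
  have hq0 : (0:ℝ) < q := by linarith
  have hc : 0 ≤ (1-β^2)/(2*β) := div_nonneg (by nlinarith) (by linarith)
  have hw : ∀ l : ℕ, 0 ≤ (q-1)/q^l := fun l => div_nonneg (by linarith) (pow_nonneg hq0.le l)
  set M := ((1-β^2)/(2*β) + ∑ i ∈ Finset.Icc 0 j, C i) * q^j with hMdef
  have hptI : ∀ k, 1 ≤ k → k ≤ j → (fun _ => pt) k ∈ Set.Ioc (0:ℝ) 1 := fun k _ _ => hpt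
  set FS : ℕ → Set ℝ := fun k => {x | ∃ d, FeasUnif j q β C p d ∧ d k = x} with hFS
  have hbdd : ∀ k, k ≤ j → BddAbove (FS k) := by
    intro k hk
    refine ⟨M, ?_⟩
    rintro x ⟨d, hd, rfl⟩
    exact feas_bound j hj q β hq hβ0 hβ1 C hC0 p hp d hd k hk
  have hne : ∀ k, (0:ℝ) ∈ FS k :=
    fun k => ⟨(fun _ => 0), zero_feas j (by omega) q β hq hβ0 hβ1 C hC0 p hp, rfl⟩
  set s : ℕ → ℝ := fun k => if k ≤ j then sSup (FS k) else 0 with hsdef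
  have hsK : ∀ k, k ≤ j → s k = sSup (FS k) := by
    intro k hk; simp only [hsdef]; rw [if_pos hk]
  have hsj1 : s (j+1) = 0 := by simp only [hsdef]; rw [if_neg (by omega)]
  have hs0 : ∀ k, 0 ≤ s k := by
    intro k
    by_cases hk : k ≤ j
    · rw [hsK k hk]; exact le_csSup (hbdd k hk) (hne k)
    · simp only [hsdef]; rw [if_neg hk]
  have hsle : ∀ d, FeasUnif j q β C p d → ∀ k, k ≤ j → d k ≤ s k := by
    intro d hd k hk
    rw [hsK k hk]
    exact le_csSup (hbdd k hk) ⟨d, hd, rfl⟩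
  set d' : ℕ → ℝ := fun k =>
    if k = 0 then (1-β^2)/(2*β) + C 0 + ∑ l ∈ Finset.Icc 1 j, (q-1)/q^l * s l
    else if k < j then
      (1 - p k) * s (k-1) + p k * (C k + ∑ l ∈ Finset.Icc 1 (j-k), (q-1)/q^l * s (k+l))
    else if k = j then (1 - p j) * s (j-1) + p j * C j
    else 0 with hd'def
  clear_value M s d'
  have hd'0 : d' 0 = (1-β^2)/(2*β) + C 0 + ∑ l ∈ Finset.Icc 1 j, (q-1)/q^l * s l := by
    simp only [hd'def]
    simp
  have hd'mid : ∀ k, 1 ≤ k → k < j →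
      d' k = (1 - p k) * s (k-1) + p k * (C k + ∑ l ∈ Finset.Icc 1 (j-k), (q-1)/q^l * s (k+l)) := by
    intro k h1 h2
    simp only [hd'def]
    rw [if_neg (by omega), if_pos h2]
  have hd'j : d' j = (1 - p j) * s (j-1) + p j * C j := by
    simp only [hd'def]
    rw [if_neg (by omega), if_neg (by omega)]
    simp
  have hd'j1 : d' (j+1) = 0 := by
    simp only [hd'def]
    rw [if_neg (by omega), if_neg (by omega), if_neg (by omega)]
  have hd'nn : ∀ k, 0 ≤ d' k := by
    intro k
    rcases (by omega : k = 0 ∨ (1 ≤ k ∧ k < j) ∨ k = j ∨ j < k) with rfl | ⟨h1, h2⟩ | h | h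
    · rw [hd'0]
      have hsum : 0 ≤ ∑ l ∈ Finset.Icc 1 j, (q-1)/q^l * s l :=
        Finset.sum_nonneg fun l _ => mul_nonneg (hw l) (hs0 l)
      have := hC0 0 (by omega)
      linarith
    · rw [hd'mid k h1 h2]
      have hpk := hp k h1 (by omega)
      have hsum : 0 ≤ ∑ l ∈ Finset.Icc 1 (j-k), (q-1)/q^l * s (k+l) :=
        Finset.sum_nonneg fun l _ => mul_nonneg (hw l) (hs0 (k+l))
      have := hC0 k (by omega)
      have := hs0 (k-1)
      nlinarith [hpk.1, hpk.2]
    · rw [h, hd'j]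
      have hpj := hp j (by omega) le_rfl
      have := hC0 j le_rfl
      have := hs0 (j-1)
      nlinarith [hpj.1, hpj.2]
    · simp only [hd'def]
      rw [if_neg (by omega), if_neg (by omega), if_neg (by omega)]
  have hA : ∀ k, k ≤ j → s k ≤ d' k := by
    intro k hk
    rw [hsK k hk]
    apply Real.sSup_le _ (hd'nn k)
    rintro x ⟨d, hd, rfl⟩
    have hdls : ∀ l, l ≤ j → d l ≤ s l := hsle d hd
    obtain ⟨hnn, h0, hmid, hjc, hj1⟩ := hd
    have hdj1 : d (j+1) = 0 := le_antisymm hj1 (hnn _ le_rfl)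
    rcases (by omega : k = 0 ∨ (1 ≤ k ∧ k < j) ∨ k = j) with rfl | ⟨h1, h2⟩ | h
    · rw [hd'0]
      have hsum : ∑ l ∈ Finset.Icc 1 j, (q-1)/q^l * d l ≤ ∑ l ∈ Finset.Icc 1 j, (q-1)/q^l * s l :=
        Finset.sum_le_sum fun l hl =>
          mul_le_mul_of_nonneg_left (hdls l (Finset.mem_Icc.mp hl).2) (hw l)
      rw [hdj1] at h0
      linarith
    · rw [hd'mid k h1 h2]
      have hx := hmid k h1 (by omega)
      rw [hdj1] at hx
      have hpk := hp k h1 (by omega)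
      have hsum : ∑ l ∈ Finset.Icc 1 (j-k), (q-1)/q^l * d (k+l)
          ≤ ∑ l ∈ Finset.Icc 1 (j-k), (q-1)/q^l * s (k+l) :=
        Finset.sum_le_sum fun l hl =>
          mul_le_mul_of_nonneg_left
            (hdls (k+l) (by have := (Finset.mem_Icc.mp hl).2; omega)) (hw l)
      have e1 : (1 - p k) * d (k-1) ≤ (1 - p k) * s (k-1) :=
        mul_le_mul_of_nonneg_left (hdls (k-1) (by omega)) (by linarith [hpk.2])
      have e2 : p k * (C k + (∑ l ∈ Finset.Icc 1 (j-k), (q-1)/q^l * d (k+l)) + 1/q^(j-k) * 0)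
          ≤ p k * (C k + ∑ l ∈ Finset.Icc 1 (j-k), (q-1)/q^l * s (k+l)) :=
        mul_le_mul_of_nonneg_left (by linarith) hpk.1.le
      linarith
    · rw [h, hd'j]
      have hx := hjc
      rw [hdj1] at hx
      have hpj := hp j (by omega) le_rfl
      have e1 : (1 - p j) * d (j-1) ≤ (1 - p j) * s (j-1) :=
        mul_le_mul_of_nonneg_left (hdls (j-1) (by omega)) (by linarith [hpj.2])
      linarith
  have hB : FeasUnif j q β C p d' := by
    refine ⟨fun k _ => hd'nn k, ?_, ?_, ?_, by rw [hd'j1]⟩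
    · rw [hd'0, hd'j1]
      have hsum : ∑ l ∈ Finset.Icc 1 j, (q-1)/q^l * s l ≤ ∑ l ∈ Finset.Icc 1 j, (q-1)/q^l * d' l :=
        Finset.sum_le_sum fun l hl =>
          mul_le_mul_of_nonneg_left (hA l (Finset.mem_Icc.mp hl).2) (hw l)
      linarith
    · intro k h1 h2
      rw [hd'mid k h1 (by omega), hd'j1]
      have hpk := hp k h1 (by omega)
      have hsum : ∑ l ∈ Finset.Icc 1 (j-k), (q-1)/q^l * s (k+l)
          ≤ ∑ l ∈ Finset.Icc 1 (j-k), (q-1)/q^l * d' (k+l) :=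
        Finset.sum_le_sum fun l hl =>
          mul_le_mul_of_nonneg_left
            (hA (k+l) (by have := (Finset.mem_Icc.mp hl).2; omega)) (hw l)
      have e1 : (1 - p k) * s (k-1) ≤ (1 - p k) * d' (k-1) :=
        mul_le_mul_of_nonneg_left (hA (k-1) (by omega)) (by linarith [hpk.2])
      have e2 : p k * (C k + ∑ l ∈ Finset.Icc 1 (j-k), (q-1)/q^l * s (k+l))
          ≤ p k * (C k + (∑ l ∈ Finset.Icc 1 (j-k), (q-1)/q^l * d' (k+l)) + 1/q^(j-k) * 0) :=
        mul_le_mul_of_nonneg_left (by linarith) hpk.1.le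
      linarith
    · rw [hd'j, hd'j1]
      have hpj := hp j (by omega) le_rfl
      have e1 : (1 - p j) * s (j-1) ≤ (1 - p j) * d' (j-1) :=
        mul_le_mul_of_nonneg_left (hA (j-1) (by omega)) (by linarith [hpj.2])
      linarith
  have hEq : ∀ k, k ≤ j → s k = d' k := fun k hk =>
    le_antisymm (hA k hk) (by rw [hsK k hk]; exact le_csSup (hbdd k hk) ⟨d', hB, rfl⟩)
  have E0 : s 0 = (1-β^2)/(2*β) + C 0 + ∑ l ∈ Finset.Icc 1 j, (q-1)/q^l * s l := by
    rw [hEq 0 (by omega), hd'0]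
  have Ej : s j = (1 - p j) * s (j-1) + p j * C j := by rw [hEq j le_rfl, hd'j]
  set R : ℕ → ℝ := fun k => C k + ∑ l ∈ Finset.Icc 1 (j-k), (q-1)/q^l * s (k+l) with hRdef
  clear_value R
  have hRj : R j = C j := by simp [hRdef]
  have hE' : ∀ k, 1 ≤ k → k ≤ j → s k = (1 - p k) * s (k-1) + p k * R k := by
    intro k h1 h2
    rcases lt_or_eq_of_le h2 with h | rfl
    · rw [hEq k (by omega), hd'mid k h1 h]
      simp only [hRdef]
    · rw [Ej, hRj]
  have hsplit : ∀ k, k < j → R k - C k = (q-1)/q * s (k+1) + (1/q) * (R (k+1) - C (k+1)) := by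
    intro k hk
    have h2 := split_aux q hq s k (j-k) (by omega)
    have h3 : j - k - 1 = j - (k+1) := by omega
    rw [h3] at h2
    simp only [hRdef]
    rw [h2]
    ring
  have hsp0' : ∑ l ∈ Finset.Icc 1 j, (q-1)/q^l * s l = (q-1)/q * s 1 + (1/q) * (R 1 - C 1) := by
    have hsum0 : ∑ l ∈ Finset.Icc 1 j, (q-1)/q^l * s l
        = ∑ l ∈ Finset.Icc 1 j, (q-1)/q^l * s (0+l) := by
      apply Finset.sum_congr rfl; intro l _; rw [Nat.zero_add]
    have hsp0 := split_aux q hq s 0 j (by omega)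
    rw [hsum0, hsp0]
    simp only [Nat.zero_add]
    simp only [hRdef]
    ring
  have hH1 : R 1 + (q-1) * s 1 ≤ q * s 0 := by
    have hmul : q * s 0 = q*((1-β^2)/(2*β)) + q*(C 0) + (q-1)*s 1 + (R 1 - C 1) := by
      rw [E0, hsp0']
      field_simp
      ring
    have h5 := hCq 0 (by omega)
    norm_num at h5
    have h6 : 0 ≤ q * ((1-β^2)/(2*β)) := mul_nonneg hq0.le hc
    linarith
  have halg : ∀ k, 1 ≤ k → k ≤ j → R k + (q-1) * s k ≤ q * s (k-1) → R k ≤ s (k-1) := by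
    intro k h1 h2 hH
    have hEk := hE' k h1 h2
    have hpk := hp k h1 h2
    have hexp : R k + (q-1) * ((1 - p k) * s (k-1) + p k * R k) ≤ q * s (k-1) := by
      rw [← hEk]; exact hH
    have h3 : R k * (1 + (q-1) * p k) ≤ s (k-1) * (1 + (q-1) * p k) := by linarith [hexp]
    have h4 : 0 < 1 + (q-1) * p k := by
      have := mul_pos (by linarith : (0:ℝ) < q - 1) hpk.1
      linarith
    exact le_of_mul_le_mul_right h3 h4
  have Hmain : ∀ k, 1 ≤ k → k ≤ j → R k + (q-1) * s k ≤ q * s (k-1) := by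
    intro k hk
    induction k, hk using Nat.le_induction with
    | base => intro _; exact hH1
    | succ n hn ih =>
      intro hnj
      have hnj' : n ≤ j := by omega
      have hH := ih (by omega)
      have hRle := halg n hn hnj' hH
      have hEn := hE' n hn hnj'
      have hpn := hp n hn hnj'
      have hRsn : R n ≤ s n := by
        nlinarith [mul_nonneg (by linarith [hpn.2] : (0:ℝ) ≤ 1 - p n)
          (by linarith : (0:ℝ) ≤ s (n-1) - R n), hEn]
      have hsp := hsplit n (by omega)
      have hiii : R (n+1) + (q-1) * s (n+1) ≤ q * R n := by
        have hRn : R n = C n + ((q-1)/q * s (n+1) + (1/q) * (R (n+1) - C (n+1))) := by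
          linarith [hsp]
        have hmul : q * R n = q * C n + (q-1) * s (n+1) + (R (n+1) - C (n+1)) :=
          mul_split q _ _ _ _ (ne_of_gt hq0) hRn
        have h5 := hCq n (by omega)
        linarith
      have hqRn : q * R n ≤ q * s n := mul_le_mul_of_nonneg_left hRsn hq0.le
      have hfin : (n+1) - 1 = n := by omega
      rw [hfin]
      linarith
  have hRle_all : ∀ k, 1 ≤ k → k ≤ j → R k ≤ s (k-1) :=
    fun k h1 h2 => halg k h1 h2 (Hmain k h1 h2)
  have hFeasPt : FeasUnif j q β C (fun _ => pt) s := by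
    refine ⟨fun k _ => hs0 k, ?_, ?_, ?_, by rw [hsj1]⟩
    · rw [hsj1]
      linarith [E0]
    · intro k h1 h2
      rw [hsj1]
      have hE := hE' k h1 (by omega)
      have hR := hRle_all k h1 (by omega)
      have hpk := hp k h1 (by omega)
      have hple' := hple k h1 (by omega)
      have hS : ∑ l ∈ Finset.Icc 1 (j-k), (q-1)/q^l * s (k+l) = R k - C k := by
        simp only [hRdef]; ring
      rw [hS]
      nlinarith [mul_nonneg (sub_nonneg.mpr hple') (sub_nonneg.mpr hR)]
    · rw [hsj1]
      have hE := hE' j (by omega) le_rfl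
      have hR := hRle_all j (by omega) le_rfl
      rw [hRj] at hE hR
      have hple' := hple j (by omega) le_rfl
      nlinarith [mul_nonneg (sub_nonneg.mpr hple') (sub_nonneg.mpr hR)]
  have hVp : Vval j q β C p = s 0 := by
    have h1 : Vval j q β C p = sSup (FS 0) := rfl
    rw [h1, hsK 0 (by omega)]
  have hbddPt : BddAbove {x | ∃ d, FeasUnif j q β C (fun _ => pt) d ∧ d 0 = x} := by
    refine ⟨M, ?_⟩
    rintro x ⟨d, hd, rfl⟩
    rw [hMdef]
    exact feas_bound j hj q β hq hβ0 hβ1 C hC0 _ hptI d hd 0 (by omega)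
  have hfin : s 0 ≤ Vval j q β C (fun _ => pt) :=
    le_csSup hbddPt ⟨s, hFeasPt, rfl⟩
  linarith
end

section
/- Let j ≥ 2 be an integer, q > 1, and p̃ ∈ ((q−1)/(2q−1), 1). Set E = (2q−1)·p̃ − (q−1), θ = (q−1)/E, and λ = (1+(q−1)p̃)/(q(1−p̃)). Define α_0 = θ·(q·p̃/(q−1) − (1−p̃)·λ^{−j}) and α_k = θ·(1 − λ^{k−(j+1)}) for k = 1,…,j. Then α_0, α_1, …, α_j are all nonnegative and satisfy with equality: α_0 = (1−p̃)·α_1 + 1; α_k = (1−p̃)·α_{k+1} + ((q−1)/q^k)·α_0 + p̃·Σ_{l=1}^{k−1} ((q−1)/q^{k−l})·α_l for k = 1,…,j−1; and α_j = ((q−1)/q^j)·α_0 + p̃·Σ_{l=1}^{j−1} ((q−1)/q^{j−l})·α_l. -/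
set_option maxHeartbeats 2000000


open Finset

/-- The explicit solution `α_0 = θ(qp̃/(q-1) - (1-p̃)λ^{-j})`,
`α_k = θ(1 - λ^{k-(j+1)})` is nonnegative and satisfies the dual constraints
(D1)–(D3) of `(DLP)_Unif` with equality. -/
theorem stmt_8
    (j : ℕ) (hj : 2 ≤ j) (q pt : ℝ) (hq : 1 < q)
    (hptlb : (q - 1)/(2*q - 1) < pt) (hpt1 : pt < 1)
    (E θ lam : ℝ)
    (hE : E = (2*q - 1)*pt - (q - 1))
    (hθ : θ = (q - 1)/E)
    (hlam : lam = (1 + (q - 1)*pt)/(q*(1 - pt)))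
    (α : ℕ → ℝ)
    (hα0 : α 0 = θ * (q*pt/(q - 1) - (1 - pt) * lam ^ (-(j:ℤ))))
    (hαk : ∀ k, 1 ≤ k → k ≤ j → α k = θ * (1 - lam ^ ((k:ℤ) - ((j:ℤ) + 1)))) :
    (∀ k ≤ j, 0 ≤ α k) ∧
    α 0 = (1 - pt) * α 1 + 1 ∧
    (∀ k, 1 ≤ k → k ≤ j - 1 →
      α k = (1 - pt) * α (k+1) + (q - 1)/q^k * α 0
        + pt * ∑ l ∈ Finset.Icc 1 (k-1), (q - 1)/q^(k-l) * α l) ∧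
    α j = (q - 1)/q^j * α 0 + pt * ∑ l ∈ Finset.Icc 1 (j-1), (q - 1)/q^(j-l) * α l := by
  have hq0 : (0:ℝ) < q := by linarith
  have hqne : (q:ℝ) ≠ 0 := ne_of_gt hq0
  have hq1 : (0:ℝ) < q - 1 := by linarith
  have hq1ne : (q:ℝ) - 1 ≠ 0 := ne_of_gt hq1
  have h2q : (0:ℝ) < 2*q - 1 := by linarith
  have hpt0 : 0 < pt := lt_trans (div_pos hq1 h2q) hptlb
  have h1p : (0:ℝ) < 1 - pt := by linarith
  have h1pne : (1:ℝ) - pt ≠ 0 := ne_of_gt h1p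
  have hE0 : 0 < E := by
    rw [hE]
    have := (div_lt_iff₀ h2q).mp hptlb
    nlinarith
  have hEne : E ≠ 0 := ne_of_gt hE0
  have hθ0 : 0 < θ := by rw [hθ]; exact div_pos hq1 hE0
  have hden : 0 < q*(1-pt) := mul_pos hq0 h1p
  have hlam1 : 1 < lam := by
    rw [hlam, lt_div_iff₀ hden]; nlinarith
  have hlam0 : (0:ℝ) < lam := by linarith
  have hlamne : lam ≠ 0 := ne_of_gt hlam0
  have hql1 : 1 < q * lam := by nlinarith
  have hqlne : q * lam ≠ 1 := ne_of_gt hql1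
  have hqlne' : q * lam - 1 ≠ 0 := sub_ne_zero.mpr (ne_of_gt hql1)
  -- abbreviation
  set μ : ℝ := lam ^ (-(j:ℤ) - 1) with hμ
  have hμpos : 0 < μ := zpow_pos hlam0 _
  have hzk : ∀ l : ℕ, lam ^ ((l:ℤ) - ((j:ℤ) + 1)) = μ * lam ^ l := by
    intro l
    have : (l:ℤ) - ((j:ℤ) + 1) = (-(j:ℤ) - 1) + l := by ring
    rw [this, zpow_add₀ hlamne, zpow_natCast]
  have hz0 : lam ^ (-(j:ℤ)) = μ * lam := by
    have : (-(j:ℤ)) = (-(j:ℤ) - 1) + 1 := by ring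
    rw [this, zpow_add₀ hlamne, zpow_one]
  -- closed form of the geometric sums
  have hsum : ∀ k : ℕ, 1 ≤ k → k ≤ j →
      ∑ l ∈ Finset.Icc 1 (k-1), (q - 1)/q^(k-l) * α l
      = (q-1)*θ/q^k * ((q^k - q)/(q-1) - μ * (((q*lam)^k - q*lam)/(q*lam-1))) := by
    intro k hk1 hkj
    have hIcc : Finset.Icc 1 (k-1) = Finset.Ico 1 k := by
      rw [← Finset.Ico_add_one_right_eq_Icc]; congr 1; omega
    rw [hIcc]
    have hterm : ∀ l ∈ Finset.Ico 1 k,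
        (q - 1)/q^(k-l) * α l = (q-1)*θ/q^k * (q^l - μ * (q*lam)^l) := by
      intro l hl
      rw [Finset.mem_Ico] at hl
      have hlj : l ≤ j := le_trans (Nat.le_of_lt hl.2) hkj
      rw [hαk l hl.1 hlj, hzk l]
      have hpow : (q:ℝ)^(k-l) = q^k / q^l := by
        rw [eq_div_iff (pow_ne_zero _ hqne), ← pow_add, Nat.sub_add_cancel (Nat.le_of_lt hl.2)]
      rw [hpow, mul_pow]
      have hqk : (q:ℝ)^k ≠ 0 := pow_ne_zero _ hqne
      have hql : (q:ℝ)^l ≠ 0 := pow_ne_zero _ hqne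
      field_simp
    rw [Finset.sum_congr rfl hterm, ← Finset.mul_sum]
    congr 1
    rw [Finset.sum_sub_distrib, ← Finset.mul_sum]
    have hqne1 : (q:ℝ) ≠ 1 := ne_of_gt hq
    rw [geom_sum_Ico hqne1 hk1, geom_sum_Ico hqlne hk1, pow_one, pow_one]
  refine ⟨?_, ?_, ?_, ?_⟩
  · -- nonnegativity
    intro k hk
    rcases Nat.eq_zero_or_pos k with rfl | hk1
    · rw [hα0]
      have hle : lam ^ (-(j:ℤ)) ≤ 1 :=
        zpow_le_one_of_nonpos₀ (le_of_lt hlam1) (by omega)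
      have h1 : (1 - pt) * lam ^ (-(j:ℤ)) ≤ 1 - pt := by nlinarith [zpow_pos hlam0 (-(j:ℤ))]
      have h2 : 1 - pt ≤ q*pt/(q-1) := by
        rw [le_div_iff₀ hq1]
        nlinarith
      nlinarith
    · rw [hαk k hk1 hk]
      have hle : lam ^ ((k:ℤ) - ((j:ℤ) + 1)) ≤ 1 := by
        apply zpow_le_one_of_nonpos₀ (le_of_lt hlam1)
        have : (k:ℤ) ≤ (j:ℤ) := by exact_mod_cast hk
        omega
      nlinarith
  · -- D1
    have h1 : α 1 = θ * (1 - lam ^ ((1:ℤ) - ((j:ℤ) + 1))) := by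
      exact_mod_cast hαk 1 le_rfl (by omega)
    have hz1 : ((1:ℤ) - ((j:ℤ) + 1)) = -(j:ℤ) := by ring
    rw [hα0, h1, hz1]
    rw [hθ, hE]
    have h2q' : (2*q - 1)*pt - (q - 1) ≠ 0 := by rw [hE] at hEne; exact hEne
    field_simp
    rw [div_add_one (by rw [mul_comm q 2]; exact h2q'), div_left_inj' (by rw [mul_comm q 2]; exact h2q')]
    ring
  · -- D2
    intro k hk1 hkj
    have hkj' : k ≤ j := by omega
    have hk1j : k + 1 ≤ j := by omega
    rw [hsum k hk1 hkj', hαk k hk1 hkj', hαk (k+1) (by omega) hk1j, hα0,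
      hzk k, hzk (k+1), hz0]
    have hzkk : ((k:ℤ)+1) = ((k+1:ℕ):ℤ) := by push_cast; ring
    have hpow1 : lam ^ (k+1) = lam ^ k * lam := pow_succ lam k
    rw [hpow1, mul_pow]
    have hqk : (q:ℝ)^k ≠ 0 := pow_ne_zero _ hqne
    have hlk : lam^k ≠ 0 := pow_ne_zero _ hlamne
    set Y := (q:ℝ)^k with hY
    set L := lam^k with hL
    clear_value Y L
    have hql : q * lam - 1 = q * pt / (1 - pt) := by rw [hlam]; field_simp; ring
    rw [hql, hlam]
    field_simp [hpt0.ne']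
    ring
  · -- D3
    have hj1 : 1 ≤ j := by omega
    rw [hsum j hj1 le_rfl, hαk j hj1 le_rfl]
    have hzj : ((j:ℤ) - ((j:ℤ) + 1)) = -1 := by ring
    rw [hzj, hα0, hz0, mul_pow]
    have hμval : μ = (lam * lam ^ j)⁻¹ := by
      rw [hμ, show (-(j:ℤ) - 1) = -(1 + (j:ℤ)) by ring, zpow_neg, zpow_add₀ hlamne,
        zpow_one, zpow_natCast]
    rw [hμval, zpow_neg_one]
    have hqj : (q:ℝ)^j ≠ 0 := pow_ne_zero _ hqne
    have hlj : lam^j ≠ 0 := pow_ne_zero _ hlamne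
    set Y := (q:ℝ)^j with hY
    set L := lam^j with hL
    clear_value Y L
    have hql : q * lam - 1 = q * pt / (1 - pt) := by rw [hlam]; field_simp; ring
    rw [hql, hlam]
    field_simp [hpt0.ne', hlj]
    ring
end

section
/- Let j ≥ 2 be an integer, q > 1, and p̃ ∈ ((q−1)/(2q−1), 1). Set E = (2q−1)·p̃ − (q−1) and θ = (q−1)/E. Then the values α_0 = θ·q·p̃/(q−1) and α_k = θ for k = 1,…,j are nonnegative and satisfy: α_0 ≥ (1−p̃)·α_1 + 1; α_k ≥ (1−p̃)·α_{k+1} + ((q−1)/q^k)·α_0 + p̃·Σ_{l=1}^{k−1} ((q−1)/q^{k−l})·α_l for k = 1,…,j−1; and α_j ≥ ((q−1)/q^j)·α_0 + p̃·Σ_{l=1}^{j−1} ((q−1)/q^{j−l})·α_l. -/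
open Finset

/-- The values `α_0 = θ q p̃/(q-1)` and `α_k = θ` for `k = 1, …, j`
are nonnegative and satisfy the dual constraints of `(DLP)_UB`. -/
theorem stmt_10
    (j : ℕ) (hj : 2 ≤ j) (q pt : ℝ) (hq : 1 < q)
    (hptlb : (q - 1)/(2*q - 1) < pt) (hpt1 : pt < 1)
    (E θ : ℝ)
    (hE : E = (2*q - 1)*pt - (q - 1))
    (hθ : θ = (q - 1)/E)
    (α : ℕ → ℝ)
    (hα0 : α 0 = θ * q * pt / (q - 1))
    (hαk : ∀ k, 1 ≤ k → k ≤ j → α k = θ) :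
    (∀ k ≤ j, 0 ≤ α k) ∧
    α 0 ≥ (1 - pt) * α 1 + 1 ∧
    (∀ k, 1 ≤ k → k ≤ j - 1 →
      α k ≥ (1 - pt) * α (k+1) + (q - 1)/q^k * α 0
        + pt * ∑ l ∈ Finset.Icc 1 (k-1), (q - 1)/q^(k-l) * α l) ∧
    α j ≥ (q - 1)/q^j * α 0 + pt * ∑ l ∈ Finset.Icc 1 (j-1), (q - 1)/q^(j-l) * α l := by
  have hq1 : (0:ℝ) < q - 1 := by linarith
  have h2q : (0:ℝ) < 2*q - 1 := by linarith
  have hqpos : (0:ℝ) < q := by linarith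
  have hE0 : 0 < E := by
    have := (div_lt_iff₀ h2q).mp hptlb
    rw [hE]; nlinarith
  have hpt0 : 0 < pt := lt_trans (div_pos hq1 h2q) hptlb
  have hθ0 : 0 < θ := by rw [hθ]; positivity
  have hα0v : α 0 = q * pt / E := by
    rw [hα0, hθ]; field_simp
  have hsum : ∀ k, 1 ≤ k → k ≤ j →
      ∑ l ∈ Finset.Icc 1 (k-1), (q - 1)/q^(k-l) * α l = θ * (q^k - q) / q^k := by
    intro k hk1 hkj
    have hIcc : Finset.Icc 1 (k-1) = Finset.Ico 1 k := by
      rw [← Finset.Ico_add_one_right_eq_Icc]; congr 1; omega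
    rw [hIcc]
    have hcong : ∀ l ∈ Finset.Ico 1 k, (q - 1)/q^(k-l) * α l = (q-1)*θ/q^k * q^l := by
      intro l hl
      simp only [Finset.mem_Ico] at hl
      rw [hαk l hl.1 (by omega)]
      have hpow : q^(k-l) = q^k / q^l := by
        rw [eq_div_iff (by positivity), ← pow_add]
        congr 1; omega
      rw [hpow]; field_simp
    rw [Finset.sum_congr rfl hcong, ← Finset.mul_sum]
    have hgeom : ∑ l ∈ Finset.Ico 1 k, q^l = (q^k - q)/(q-1) := by
      rw [Finset.sum_Ico_eq_sum_range]
      simp only [pow_add, pow_one]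
      rw [← Finset.mul_sum, geom_sum_eq (by linarith : q ≠ 1)]
      have hk' : q ^ (k - 1) * q = q ^ k := by
        rw [← pow_succ]; congr 1; omega
      field_simp
      nlinarith [hk']
    rw [hgeom]
    field_simp
  refine ⟨?_, ?_, ?_, ?_⟩
  · intro k hk
    rcases Nat.eq_zero_or_pos k with rfl | hk1
    · rw [hα0v]; positivity
    · rw [hαk k hk1 hk]; exact hθ0.le
  · have h1 : α 1 = θ := hαk 1 le_rfl (by omega)
    rw [hα0v, h1, hθ, hE]
    have : q * pt / ((2*q - 1)*pt - (q - 1)) =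
        (1 - pt) * ((q - 1)/((2*q - 1)*pt - (q - 1))) + 1 := by
      rw [hE] at hE0
      have hne : (2*q - 1)*pt - (q - 1) ≠ 0 := hE0.ne'
      rw [mul_div_assoc', div_add_one hne]; congr 1
      ring
    rw [this]
  · intro k hk1 hkj
    have hkj' : k ≤ j := by omega
    have hk1j : k + 1 ≤ j := by omega
    rw [hαk k hk1 hkj', hαk (k+1) (by omega) hk1j, hsum k hk1 hkj', hα0v]
    have hqk : (0:ℝ) < q^k := by positivity
    have : (1 - pt) * θ + (q - 1)/q^k * (q * pt / E)
        + pt * (θ * (q^k - q) / q^k) = θ := by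
      rw [hθ]
      field_simp
      ring
    rw [this]
  · have hj1 : 1 ≤ j := by omega
    rw [hαk j hj1 le_rfl, hsum j hj1 le_rfl, hα0v]
    have hqj : (0:ℝ) < q^j := by positivity
    have heq : (q - 1)/q^j * (q * pt / E) + pt * (θ * (q^j - q) / q^j) = pt * θ := by
      rw [hθ]
      field_simp
      ring
    rw [heq]
    nlinarith
end

section
/- Let j ≥ 2 be an integer, q > 1, 0 < β ≤ 1, let p_1,…,p_j ∈ (0,1], and let C_0,…,C_j ≥ 0 satisfy q·C_k ≥ C_{k+1} for k = 0,…,j−1. Suppose d_0,…,d_{j+1} ≥ 0 satisfy with equality: d_0 = (1−β²)/(2β) + C_0 + Σ_{l=1}^j ((q−1)/q^l)·d_l + (1/q^j)·d_{j+1}; d_k = (1−p_k)·d_{k−1} + p_k·(C_k + Σ_{l=1}^{j−k} ((q−1)/q^l)·d_{k+l} + (1/q^{j−k})·d_{j+1}) for k = 1,…,j−1; d_j = (1−p_j)·d_{j−1} + p_j·(C_j + d_{j+1}); and d_{j+1} = 0. Then the sequence is non-increasing: d_{k−1} ≥ d_k for every k = 1,…,j+1. -/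
open Finset

/-- If `d_0, …, d_{j+1} ≥ 0` satisfy the constraints of
`(LP)_Unif(p, C)` with equality and the costs satisfy `q C_k ≥ C_{k+1}`, then the
sequence `d` is non-increasing: `d_{k-1} ≥ d_k` for every `k = 1, …, j+1`. -/
theorem stmt_19
    (j : ℕ) (hj : 2 ≤ j) (q β : ℝ) (hq : 1 < q) (hβ0 : 0 < β) (hβ1 : β ≤ 1)
    (p : ℕ → ℝ) (hp : ∀ k, 1 ≤ k → k ≤ j → p k ∈ Set.Ioc (0:ℝ) 1)
    (C : ℕ → ℝ) (hC0 : ∀ k ≤ j, 0 ≤ C k)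
    (hCq : ∀ k, k ≤ j - 1 → q * C k ≥ C (k+1))
    (d : ℕ → ℝ) (hd0 : ∀ k ≤ j + 1, 0 ≤ d k)
    (he0 : d 0 = (1 - β^2)/(2*β) + C 0 + (∑ l ∈ Finset.Icc 1 j, (q - 1)/q^l * d l)
        + (1/q^j) * d (j+1))
    (hek : ∀ k, 1 ≤ k → k ≤ j - 1 →
      d k = (1 - p k) * d (k-1)
        + p k * (C k + (∑ l ∈ Finset.Icc 1 (j-k), (q - 1)/q^l * d (k+l))
            + (1/q^(j-k)) * d (j+1)))
    (hej : d j = (1 - p j) * d (j-1) + p j * (C j + d (j+1)))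
    (hlast : d (j+1) = 0) :
    ∀ k, 1 ≤ k → k ≤ j + 1 → d k ≤ d (k-1) := by
  have hq0 : (0:ℝ) < q := by linarith
  have hqne : q ≠ 0 := ne_of_gt hq0
  set A : ℕ → ℝ := fun k => C k + ∑ l ∈ Finset.Icc 1 (j-k), (q - 1)/q^l * d (k+l) with hA
  -- the constraints in terms of A
  have hF2 : ∀ k, 1 ≤ k → k ≤ j → d k = (1 - p k) * d (k-1) + p k * A k := by
    intro k hk1 hkj
    by_cases h : k = j
    · subst h
      rw [hej, hlast]
      simp [hA, Nat.sub_self]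
    · rw [hek k hk1 (by omega), hlast]
      simp [hA]
  -- shift identity for the sums
  have hshift : ∀ k, k + 1 ≤ j →
      (∑ l ∈ Finset.Icc 1 (j-k), (q - 1)/q^l * d (k+l))
        = (q-1)/q * d (k+1) + (1/q) * ∑ l ∈ Finset.Icc 1 (j-(k+1)), (q - 1)/q^l * d (k+1+l) := by
    intro k hk
    have hm : j - k = (j - (k+1)) + 1 := by omega
    rw [hm]
    generalize j - (k+1) = m
    rw [← Finset.Ico_add_one_right_eq_Icc, ← Finset.Ico_add_one_right_eq_Icc,
      Finset.sum_Ico_eq_sum_range, Finset.sum_Ico_eq_sum_range]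
    simp only [Nat.add_sub_cancel, Nat.succ_sub_one]
    rw [Finset.sum_range_succ']
    rw [Finset.mul_sum]
    have hterm : ∀ i ∈ Finset.range m,
        (q-1)/q^(1+(i+1)) * d (k+(1+(i+1))) = (1/q) * ((q-1)/q^(1+i) * d (k+1+(1+i))) := by
      intro i _
      have h1 : k+(1+(i+1)) = k+1+(1+i) := by omega
      have h2 : 1+(i+1) = (1+i)+1 := by omega
      rw [h1, h2, pow_succ]
      ring
    rw [Finset.sum_congr rfl hterm]
    simp only [Nat.add_zero, pow_one]
    ring
  have hF1 : ∀ k, k + 1 ≤ j →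
      A k = C k - C (k+1)/q + (q-1)/q * d (k+1) + (1/q) * A (k+1) := by
    intro k hk
    simp only [hA]
    rw [hshift k hk]
    ring
  -- main induction
  have hQ : ∀ k, k ≤ j → A k ≤ d k ∧ (1 ≤ k → A k ≤ d (k-1)) := by
    intro k
    induction k with
    | zero =>
      intro _
      refine ⟨?_, by omega⟩
      have h0 : A 0 = C 0 + ∑ l ∈ Finset.Icc 1 j, (q-1)/q^l * d l := by
        simp [hA]
      rw [hlast] at he0
      have hβ2 : 0 ≤ (1-β^2)/(2*β) := by
        apply div_nonneg
        · nlinarith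
        · linarith
      rw [h0, he0]
      linarith
    | succ k ih =>
      intro hk1
      have ihk := ih (by omega)
      obtain ⟨hp0, hp1⟩ := hp (k+1) (by omega) (by omega)
      have hF2' := hF2 (k+1) (by omega) (by omega)
      simp only [Nat.add_sub_cancel] at hF2'
      have hF1' := hF1 k hk1
      have hCq' := hCq k (by omega)
      have h1q : q * A k ≤ q * d k := by
        exact mul_le_mul_of_nonneg_left ihk.1 hq0.le
      have hF1'' : q * A k = q * C k - C (k+1) + (q-1) * d (k+1) + A (k+1) := by
        rw [hF1']; field_simp
      have h2 : (q-1) * d (k+1)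
          = (q-1)*((1 - p (k+1)) * d k + p (k+1) * A (k+1)) := by rw [← hF2']
      have key : A (k+1) * ((q-1)*p (k+1) + 1) ≤ d k * ((q-1)*p (k+1) + 1) := by
        nlinarith [h1q, hF1'', h2, hCq']
      have hpos : (0:ℝ) < (q-1)*p (k+1) + 1 := by nlinarith [mul_pos (by linarith : (0:ℝ) < q-1) hp0]
      have hS : A (k+1) ≤ d k := le_of_mul_le_mul_right key hpos
      refine ⟨?_, fun _ => by simpa using hS⟩
      rw [hF2']
      nlinarith [hS, hp1]
  -- conclusion
  intro k hk1 hk2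
  by_cases h : k = j + 1
  · subst h
    simp only [Nat.add_sub_cancel]
    rw [hlast]
    exact hd0 j (by omega)
  · have hkj : k ≤ j := by omega
    have hAk := (hQ k hkj).2 hk1
    obtain ⟨hp0, hp1⟩ := hp k hk1 hkj
    rw [hF2 k hk1 hkj]
    nlinarith [hAk, hp0]
end
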